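/- arXiv:1105.5179 — 7 statements merged into one kernel-verified Lean document; each statement's English description precedes it below -/
import Mathlib

section
/- Let (R, m) be a finite commutative local ring of characteristic p, where p is prime, and suppose |R/m| = p^m. Then there exist an element β ∈ R and a positive integer t such that β^{p^{mt} − 1} = 1, the subring A = ℤ_p[β] of R generated by β over the prime subring is a finite field, and the residue map R → R/m restricts to a ring isomorphism from A onto R/m; that is, A is a coefficient field of R. -/
/-- Theorem 2.2: For a finite commutative local ring `(R, m)` of prime characteristic `p`
with `|R/m| = p ^ m`, there exist `β ∈ R` and a positive integer `t` such that
`β ^ (p ^ (m * t) - 1) = 1`, the subring `A = ℤ_p[β]` generated by `β` is a (finite) field,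
and the residue map restricts to a ring isomorphism from `A` onto `R/m`;
that is, `A` is a coefficient field of `R`. -/
theorem exists_coefficient_field_of_finite_local_ring
    (p m : ℕ) (hp : p.Prime) (R : Type*) [CommRing R] [IsLocalRing R] [Finite R]
    [CharP R p] (hcard : Nat.card (IsLocalRing.ResidueField R) = p ^ m) :
    ∃ (β : R) (t : ℕ), 0 < t ∧ β ^ (p ^ (m * t) - 1) = 1 ∧
      IsField (Subring.closure {β}) ∧
      Function.Bijective
        ((IsLocalRing.residue R).comp (Subring.closure {β}).subtype) := by
  classical
  haveI := Fact.mk hp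
  haveI : Finite (IsLocalRing.ResidueField R) := Finite.of_surjective _ (IsLocalRing.residue_surjective (R := R))
  haveI : Fintype (IsLocalRing.ResidueField R) := Fintype.ofFinite _
  have hq : Fintype.card (IsLocalRing.ResidueField R) = p ^ m := by rw [← Nat.card_eq_fintype_card, hcard]
  have hq2 : 2 ≤ p ^ m := by rw [← hq]; exact Fintype.one_lt_card
  -- per-element nilpotency in the maximal ideal
  have hnil : ∀ x : R, x ∈ IsLocalRing.maximalIdeal R → ∃ c : ℕ, x ^ (c + 1) = 0 := by
    intro x hx
    obtain ⟨a, b, hab, hpow⟩ := Finite.exists_ne_map_eq_of_infinite (fun n : ℕ => x ^ n)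
    wlog h : a < b generalizing a b
    · exact this b a hab.symm hpow.symm (by omega)
    have hxk : x ^ (b - a) ∈ IsLocalRing.maximalIdeal R := by
      have hba : b - a = (b - a - 1) + 1 := by omega
      rw [hba, pow_succ]
      exact Ideal.mul_mem_left _ _ hx
    have hu : IsUnit (1 - x ^ (b - a)) := IsLocalRing.isUnit_one_sub_self_of_mem_nonunits _ hxk
    have key : x ^ a * (1 - x ^ (b - a)) = 0 := by
      have h2 : x ^ a * x ^ (b - a) = x ^ b := by rw [← pow_add]; congr 1; omega
      simp only [mul_sub, mul_one, h2, ← hpow]; ring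
    have hxa : x ^ a = 0 := (hu.mul_left_eq_zero).mp key
    exact ⟨a, by rw [pow_succ, hxa, zero_mul]⟩
  -- generator of the residue field's unit group and a lift
  obtain ⟨ζ, hζ⟩ := IsCyclic.exists_monoid_generator (α := (IsLocalRing.ResidueField R)ˣ)
  obtain ⟨u, hu⟩ := IsLocalRing.residue_surjective ((ζ : (IsLocalRing.ResidueField R)ˣ) : (IsLocalRing.ResidueField R))
  have hζq : (ζ : (IsLocalRing.ResidueField R)ˣ) ^ (p ^ m - 1) = 1 := by
    rw [← hq, ← Fintype.card_units]; exact pow_card_eq_one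
  have hζqv : ((ζ : (IsLocalRing.ResidueField R)ˣ) : (IsLocalRing.ResidueField R)) ^ (p ^ m - 1) = 1 := by
    rw [← Units.val_pow_eq_pow_val, hζq, Units.val_one]
  -- u ^ (q - 1) = 1 + x with x in the maximal ideal
  set x : R := u ^ (p ^ m - 1) - 1 with hx
  have hxm : x ∈ IsLocalRing.maximalIdeal R := by
    have h0 : IsLocalRing.residue R x = 0 := by
      rw [hx, map_sub, map_pow, hu, map_one, hζqv, sub_self]
    exact Ideal.Quotient.eq_zero_iff_mem.mp h0
  obtain ⟨c, hc⟩ := hnil x hxm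
  -- choose t
  set t := c + 1 with ht
  set N := p ^ (m * t) with hN
  have hN2 : c + 1 < N := by
    calc c + 1 < 2 ^ t := by rw [ht]; exact Nat.lt_two_pow_self
    _ ≤ (p ^ m) ^ t := Nat.pow_le_pow_left hq2 t
    _ = N := by rw [hN, pow_mul]
  have hxN : x ^ N = 0 := by
    have : x ^ N = x ^ (c + 1) * x ^ (N - (c + 1)) := by rw [← pow_add]; congr 1; omega
    rw [this, hc, zero_mul]
  set β : R := u ^ N with hβ
  have hβq : β ^ (p ^ m - 1) = 1 := by
    have h1 : β ^ (p ^ m - 1) = (1 + x) ^ N := by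
      rw [hβ, ← pow_mul, mul_comm, pow_mul]
      congr 1
      rw [hx]; ring
    rw [h1, add_pow_char_pow, one_pow, hxN, add_zero]
  have hdvd : p ^ m - 1 ∣ N - 1 := by
    have := Nat.sub_dvd_pow_sub_pow (p ^ m) 1 t
    simpa [hN, pow_mul] using this
  obtain ⟨d, hd⟩ := hdvd
  have hNd : N = (p ^ m - 1) * d + 1 := by
    have hN1 : 1 ≤ N := by rw [hN]; exact Nat.one_le_pow _ _ hp.pos
    omega
  have hβN1 : β ^ (N - 1) = 1 := by
    rw [hd, pow_mul, hβq, one_pow]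
  have hβN : β ^ N = β := by
    have : β ^ N = β ^ (N - 1) * β := by rw [← pow_succ]; congr 1; omega
    rw [this, hβN1, one_mul]
  -- residue of β is the generator
  have hresβ : IsLocalRing.residue R β = ((ζ : (IsLocalRing.ResidueField R)ˣ) : (IsLocalRing.ResidueField R)) := by
    rw [hβ, map_pow, hu, hNd, pow_succ, pow_mul, hζqv, one_pow, one_mul]
  -- every element of the closure is fixed by x ↦ x ^ N
  have hfix : ∀ a ∈ Subring.closure {β}, a ^ N = a := by
    have hle : Subring.closure {β} ≤ RingHom.eqLocus (iterateFrobenius R p (m * t)) (RingHom.id R) := by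
      rw [Subring.closure_le, Set.singleton_subset_iff]
      show iterateFrobenius R p (m * t) β = β
      rw [iterateFrobenius_def, ← hN, hβN]
    intro a ha
    have := hle ha
    simpa [RingHom.eqLocus, iterateFrobenius_def, ← hN] using this
  -- injectivity
  set f := (IsLocalRing.residue R).comp (Subring.closure {β}).subtype with hf
  have hinj : Function.Injective f := by
    rw [injective_iff_map_eq_zero]
    intro a ha
    have hmem : (a : R) ∈ IsLocalRing.maximalIdeal R :=
      Ideal.Quotient.eq_zero_iff_mem.mp ha
    obtain ⟨e, he⟩ := hnil _ hmem
    -- (a : R) ^ (N ^ s) = a for all s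
    have hiter : ∀ s : ℕ, (a : R) ^ (N ^ s) = a := by
      intro s
      induction s with
      | zero => simp
      | succ s ih =>
        rw [pow_succ, pow_mul, ih]
        exact hfix _ a.2
    have hlt : e + 1 < N ^ (e + 1) := by
      calc e + 1 < 2 ^ (e + 1) := Nat.lt_two_pow_self
      _ ≤ N ^ (e + 1) := Nat.pow_le_pow_left (by omega) _
    have : (a : R) = 0 := by
      have h1 : (a : R) ^ (N ^ (e + 1)) = 0 := by
        have : (a : R) ^ (N ^ (e + 1)) = (a : R) ^ (e + 1) * (a : R) ^ (N ^ (e + 1) - (e + 1)) := by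
          rw [← pow_add]; congr 1; omega
        rw [this, he, zero_mul]
      rw [← hiter (e + 1), h1]
    exact Subtype.ext this
  -- surjectivity
  have hsurj : Function.Surjective f := by
    intro y
    by_cases hy : y = 0
    · exact ⟨0, by simp [hf, hy]⟩
    · obtain ⟨i, hi⟩ := hζ (Units.mk0 y hy)
      refine ⟨⟨β ^ i, pow_mem (Subring.subset_closure (Set.mem_singleton β)) i⟩, ?_⟩
      have hi' : ζ ^ i = Units.mk0 y hy := hi
      have : IsLocalRing.residue R (β ^ i) = y := by
        rw [map_pow, hresβ, ← Units.val_pow_eq_pow_val, hi', Units.val_mk0]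
      simpa [hf] using this
  have hbij : Function.Bijective f := ⟨hinj, hsurj⟩
  refine ⟨β, t, by omega, ?_, ?_, hbij⟩
  · rw [← hN]; exact hβN1
  · exact MulEquiv.isField (Field.toIsField (IsLocalRing.ResidueField R)) (RingEquiv.ofBijective f hbij).toMulEquiv
end

section
/- Let (R, m) be a finite commutative local ring with char(R) = p, where p is prime. If every ideal of R is principal and m has nilpotency index s, then R is isomorphic as a ring to F[X]/(X^s) for some finite field F (namely a field F isomorphic to R/m). -/
open Polynomial IsLocalRing

/-- Corollary 2.3 (forward direction): a finite commutative local ring of prime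
characteristic `p` in which every ideal is principal and whose maximal ideal has
nilpotency index `s` is isomorphic to `F[X]/(X^s)` for a finite field `F`,
namely `F = R/m` the residue field. -/
theorem finite_local_pir_char_p_iso_quotient_polynomial
    (p s : ℕ) (hp : p.Prime) (R : Type*) [CommRing R] [IsLocalRing R] [Finite R]
    [CharP R p] (hpir : IsPrincipalIdealRing R) (hs : 0 < s)
    (hnil : (IsLocalRing.maximalIdeal R) ^ s = ⊥)
    (hnil' : (IsLocalRing.maximalIdeal R) ^ (s - 1) ≠ ⊥) :
    Nonempty
      (R ≃+* (Polynomial (IsLocalRing.ResidueField R) ⧸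
        Ideal.span {(Polynomial.X : Polynomial (IsLocalRing.ResidueField R)) ^ s})) := by
  classical
  haveI := Fact.mk hp
  haveI : ExpChar R p := .prime hp
  set m := IsLocalRing.maximalIdeal R with hm
  set F := ResidueField R with hF
  haveI : Finite F := Finite.of_surjective (residue R) Ideal.Quotient.mk_surjective
  obtain ⟨N, hN⟩ : ∃ N, s ≤ p ^ N := ⟨s, (Nat.lt_pow_self (n := s) hp.one_lt).le⟩
  have hker : ∀ x ∈ m, iterateFrobenius R p N x = 0 := by
    intro x hx
    have hxs : x ^ s = 0 := by
      have : x ^ s ∈ m ^ s := Ideal.pow_mem_pow hx s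
      simpa [hnil] using this
    rw [iterateFrobenius_def]
    calc x ^ p ^ N = x ^ s * x ^ (p ^ N - s) := by rw [← pow_add]; congr 1; omega
    _ = 0 := by rw [hxs, zero_mul]
  let ι0 : F →+* R := Ideal.Quotient.lift m (iterateFrobenius R p N) hker
  let τhom : F →+* F := (residue R).comp ι0
  have hτ : Function.Bijective τhom :=
    (Finite.injective_iff_bijective).mp τhom.injective
  let τ : F ≃+* F := RingEquiv.ofBijective τhom hτ
  let σ : F →+* R := ι0.comp (τ.symm : F →+* F)
  have hσ : ∀ a : F, residue R (σ a) = a := by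
    intro a
    show τhom (τ.symm a) = a
    exact τ.apply_symm_apply a
  -- the generator of m
  obtain ⟨t, ht⟩ := (hpir.principal m).principal
  have ht' : m = Ideal.span {t} := ht
  have htm : t ∈ m := ht' ▸ Ideal.subset_span rfl
  have hts : t ^ s = 0 := by
    have : t ^ s ∈ m ^ s := Ideal.pow_mem_pow htm s
    simpa [hnil] using this
  let Ψ : Polynomial F →+* R := eval₂RingHom σ t
  have hΨCX : ∀ (c : F) (j : ℕ), Ψ (C c * X ^ j) = σ c * t ^ j := by
    intro c j; simp [Ψ]
  -- surjectivity
  have key : ∀ k, ∀ r ∈ m ^ (s - k), r ∈ Ψ.range := by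
    intro k
    induction k with
    | zero =>
      intro r hr
      rw [Nat.sub_zero, hnil, Ideal.mem_bot] at hr
      exact ⟨0, by simp [hr]⟩
    | succ k ih =>
      intro r hr
      by_cases hks : s ≤ k
      · have heq : s - (k + 1) = s - k := by omega
        exact ih r (heq ▸ hr)
      · set j := s - (k + 1) with hj
        have hj1 : j + 1 = s - k := by omega
        rw [ht', Ideal.span_singleton_pow, Ideal.mem_span_singleton] at hr
        obtain ⟨u, hu⟩ := hr
        have h1 : u - σ (residue R u) ∈ m := by
          have : residue R (u - σ (residue R u)) = 0 := by
            rw [map_sub, hσ, sub_self]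
          exact Ideal.Quotient.eq_zero_iff_mem.mp this
        have h2 : t ^ j * (u - σ (residue R u)) ∈ m ^ (s - k) := by
          rw [← hj1, pow_succ]
          exact Ideal.mul_mem_mul (Ideal.pow_mem_pow htm j) h1
        obtain ⟨g, hg⟩ := ih _ h2
        refine ⟨C (residue R u) * X ^ j + g, ?_⟩
        rw [map_add, hg, hΨCX, hu]
        ring
  have hsurj : Function.Surjective Ψ := by
    intro r
    have : r ∈ m ^ (s - s) := by
      rw [Nat.sub_self, pow_zero, Ideal.one_eq_top]; trivial
    exact key s r this
  -- kernel
  have hXs : Ψ (X ^ s) = 0 := by simp [Ψ, hts]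
  have hkerΨ : RingHom.ker Ψ = Ideal.span {X ^ s} := by
    apply le_antisymm
    · intro f hf
      have hf0 : Ψ f = 0 := hf
      have hmonic : (X ^ s : Polynomial F).Monic := monic_X_pow s
      have hfr : X ^ s * (f /ₘ X ^ s) + f %ₘ X ^ s = f := by
        rw [add_comm]; exact modByMonic_add_div f (X ^ s)
      set r := f %ₘ (X ^ s) with hrdef
      have hΨr : Ψ r = 0 := by
        have := congrArg Ψ hfr
        rw [map_add, map_mul, hXs, zero_mul, zero_add, hf0] at this
        exact this
      have hr0 : r = 0 := by
        by_contra hne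
        have hnd : r.natDegree < s := by
          have hdeg := degree_modByMonic_lt f hmonic
          rw [degree_X_pow] at hdeg
          exact natDegree_lt_iff_degree_lt hne |>.mpr hdeg
        set i0 := r.natTrailingDegree with hi0
        have hdvd : X ^ i0 ∣ r :=
          X_pow_dvd_iff.mpr fun d hd => coeff_eq_zero_of_lt_natTrailingDegree hd
        obtain ⟨r', hr'⟩ := hdvd
        have hc0 : r'.coeff 0 ≠ 0 := by
          have h := coeff_X_pow_mul r' i0 0
          rw [← hr', zero_add] at h
          rw [← h]
          exact mt trailingCoeff_eq_zero.mp hne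
        have hsplit : Ψ r = t ^ i0 * Ψ r' := by
          rw [hr', map_mul]; simp [Ψ]
        have hresr' : residue R (Ψ r') = r'.coeff 0 := by
          show residue R (eval₂ σ t r') = r'.coeff 0
          rw [hom_eval₂]
          have h1 : (residue R).comp σ = RingHom.id F := RingHom.ext hσ
          have h2 : residue R t = 0 := Ideal.Quotient.eq_zero_iff_mem.mpr htm
          rw [h1, h2, eval₂_at_zero, RingHom.id_apply]
        have hunit : IsUnit (Ψ r') := by
          by_contra hnu
          have hmem : Ψ r' ∈ m := hnu
          exact hc0 (by rw [← hresr']; exact Ideal.Quotient.eq_zero_iff_mem.mpr hmem)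
        have ht0 : t ^ i0 = 0 := by
          have := hΨr
          rw [hsplit] at this
          exact (hunit.mul_left_eq_zero).mp this
        apply hnil'
        have hle : i0 ≤ s - 1 := by
          have := r.natTrailingDegree_le_natDegree; omega
        have hts1 : t ^ (s - 1) = 0 := by
          calc t ^ (s - 1) = t ^ i0 * t ^ (s - 1 - i0) := by rw [← pow_add]; congr 1; omega
          _ = 0 := by rw [ht0, zero_mul]
        rw [ht', Ideal.span_singleton_pow, hts1, Ideal.span_singleton_eq_bot]
      rw [← hfr, hr0, add_zero]
      exact Ideal.mem_span_singleton.mpr ⟨_, rfl⟩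
    · rw [Ideal.span_le]
      intro x hx
      rw [Set.mem_singleton_iff] at hx
      subst hx
      exact hXs
  exact ⟨((Ideal.quotEquivOfEq hkerΨ.symm).trans
    (RingHom.quotientKerEquivOfSurjective hsurj)).symm⟩
end

section
/- Let p be a prime, s ≥ 1 and m ≥ 0 integers, g(X) ∈ ℤ_p[X] a monic irreducible polynomial, and v_1(X), …, v_m(X) ∈ ℤ_p[X] polynomials not divisible by g(X) with deg v_j(X) < deg g(X) for all j. Let 1 ≤ s_1 < s_2 < ⋯ < s_m ≤ s be integers and set Q = (Y^{s+1}, g(X) − Σ_{j=1}^m v_j(X)Y^{s_j}) in S = ℤ_p[X, Y]. Then S/Q is a finite commutative local ring of characteristic p in which every ideal is principal, and its maximal ideal has nilpotency index s + 1; in particular S/Q has exactly s nontrivial ideals. -/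
set_option synthInstance.maxHeartbeats 400000

open Polynomial

/-- The ideal `Q = (Y^{s+1}, g(X) - ∑ⱼ vⱼ(X)·Y^{sⱼ})` of `S = ℤ_p[X][Y]`, where `S` is
modelled as `Polynomial (Polynomial (ZMod p))`, the outer indeterminate playing the
role of `Y` and the inner one the role of `X`. -/
noncomputable def paperIdealQp (p s : ℕ) {m : ℕ} (g : Polynomial (ZMod p))
    (v : Fin m → Polynomial (ZMod p)) (σ : Fin m → ℕ) :
    Ideal (Polynomial (Polynomial (ZMod p))) :=
  Ideal.span
    { (Polynomial.X : Polynomial (Polynomial (ZMod p))) ^ (s + 1),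
      Polynomial.C g - ∑ j, Polynomial.C (v j) * Polynomial.X ^ (σ j) }

set_option maxHeartbeats 1000000
open IsLocalRing

lemma aux_adjoin_CX_X (R : Type*) [CommSemiring R] :
    Algebra.adjoin R ({Polynomial.C Polynomial.X, Polynomial.X} :
      Set (Polynomial (Polynomial R))) = ⊤ := by
  suffices h : ∀ f : Polynomial (Polynomial R), f ∈ Algebra.adjoin R ({C X, X} :
      Set (Polynomial (Polynomial R))) by
    rw [eq_top_iff]; intro f _; exact h f
  intro f
  have hX : (X : Polynomial (Polynomial R)) ∈ Algebra.adjoin R {C X, X} :=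
    Algebra.subset_adjoin (by simp)
  have hCX : (C X : Polynomial (Polynomial R)) ∈ Algebra.adjoin R {C X, X} :=
    Algebra.subset_adjoin (by simp)
  induction f using Polynomial.induction_on with
  | C a =>
      induction a using Polynomial.induction_on with
      | C r =>
          have : (C (C r) : Polynomial (Polynomial R)) = algebraMap R _ r := by
            simp [Polynomial.algebraMap_apply]
          rw [this]
          exact Subalgebra.algebraMap_mem _ r
      | add a b ha hb => rw [map_add]; exact add_mem ha hb
      | monomial n r ih =>
          have : (C (C r * X ^ (n + 1)) : Polynomial (Polynomial R))
              = C (C r * X ^ n) * C X := by rw [← map_mul]; ring_nf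
          rw [this]; exact mul_mem ih hCX
  | add f g hf hg => exact add_mem hf hg
  | monomial n a ih =>
      have : (C a * X ^ (n + 1) : Polynomial (Polynomial R))
          = C a * X ^ n * X := by ring
      rw [this]; exact mul_mem ih hX

lemma aux_aeval_CX {R : Type*} [CommSemiring R] (q : Polynomial R) :
    Polynomial.aeval (Polynomial.C Polynomial.X : Polynomial (Polynomial R)) q
      = Polynomial.C q := by
  have h := Polynomial.hom_eval₂ q (C : R →+* Polynomial R)
    (C : Polynomial R →+* Polynomial (Polynomial R)) X
  rw [eval₂_C_X] at h
  rw [aeval_def]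
  have : (algebraMap R (Polynomial (Polynomial R)))
      = (C : Polynomial R →+* Polynomial (Polynomial R)).comp (C : R →+* Polynomial R) := by
    ext r; simp [Polynomial.algebraMap_apply]
  rw [this, ← h]


lemma aux_chain {R : Type*} [CommRing R] [IsLocalRing R] (t : R)
    (ht : IsLocalRing.maximalIdeal R = Ideal.span {t}) {n : ℕ} (hn : t ^ n = 0)
    (I : Ideal R) (hI : I ≠ ⊥) : ∃ k, I = Ideal.span {t ^ k} := by
  classical
  have hP : ∃ k, ¬ I ≤ Ideal.span {t ^ k} := by
    refine ⟨n, ?_⟩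
    rw [hn]
    simpa [Ideal.span_singleton_eq_bot.mpr rfl, le_bot_iff] using hI
  set k := Nat.find hP with hkdef
  have hk : ¬ I ≤ Ideal.span {t ^ k} := Nat.find_spec hP
  have hk0 : k ≠ 0 := by
    intro h
    apply hk
    rw [h, pow_zero, Ideal.span_singleton_one]
    exact le_top
  have hk1 : I ≤ Ideal.span {t ^ (k - 1)} := by
    by_contra h
    exact Nat.find_min hP (by omega) h
  obtain ⟨a, haI, hak⟩ := SetLike.not_le_iff_exists.mp hk
  obtain ⟨c, hc⟩ := Ideal.mem_span_singleton'.mp (hk1 haI)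
  have hpow : t * t ^ (k - 1) = t ^ k := by
    conv_rhs => rw [show k = 1 + (k - 1) by omega]
    rw [pow_add, pow_one]
  have hcu : IsUnit c := by
    by_contra hcu
    have hcm : c ∈ maximalIdeal R := mem_maximalIdeal c |>.mpr hcu
    rw [ht, Ideal.mem_span_singleton'] at hcm
    obtain ⟨d, hd⟩ := hcm
    apply hak
    rw [Ideal.mem_span_singleton']
    exact ⟨d, by rw [← hc, ← hd, ← hpow]; ring⟩
  obtain ⟨u, hu⟩ := hcu
  have htk : t ^ (k - 1) = (↑u⁻¹ : R) * a := by
    rw [← hc, ← hu, ← mul_assoc, Units.inv_mul, one_mul]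
  have hle : Ideal.span {t ^ (k - 1)} ≤ I := by
    rw [Ideal.span_singleton_le_iff_mem, htk]
    exact I.mul_mem_left _ haI
  exact ⟨k - 1, le_antisymm hk1 hle⟩

lemma aux_pir {R : Type*} [CommRing R] [IsLocalRing R] (t : R)
    (ht : IsLocalRing.maximalIdeal R = Ideal.span {t}) {n : ℕ} (hn : t ^ n = 0) :
    IsPrincipalIdealRing R := by
  constructor
  intro I
  by_cases hI : I = ⊥
  · exact ⟨⟨0, by rw [hI]; exact (Ideal.span_singleton_eq_bot.mpr rfl).symm⟩⟩
  · obtain ⟨k, hk⟩ := aux_chain t ht hn I hI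
    exact ⟨⟨t ^ k, hk⟩⟩

lemma aux_count {R : Type*} [CommRing R] [IsLocalRing R] (t : R) (s : ℕ)
    (ht : IsLocalRing.maximalIdeal R = Ideal.span {t})
    (hn : t ^ (s + 1) = 0) (hts : t ^ s ≠ 0) :
    Nat.card {I : Ideal R // I ≠ ⊥ ∧ I ≠ ⊤} = s := by
  classical
  have hpowne : ∀ i, i ≤ s → t ^ i ≠ 0 := by
    intro i hi h
    apply hts
    rw [show s = i + (s - i) by omega, pow_add, h, zero_mul]
  have hne : ∀ i j : ℕ, i < j → i ≤ s → Ideal.span {t ^ i} ≠ Ideal.span {t ^ j} := by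
    intro i j hij his heq
    have hmem : t ^ i ∈ Ideal.span {t ^ j} := by
      rw [← heq]; exact Ideal.mem_span_singleton_self _
    obtain ⟨c, hc⟩ := Ideal.mem_span_singleton'.mp hmem
    apply hts
    have h1 : t ^ s = t ^ (s - i) * t ^ i := by rw [← pow_add]; congr 1; omega
    have h2 : t ^ (s - i) * (c * t ^ j) = c * (t ^ (s + 1) * t ^ (s - i + j - (s + 1))) := by
      rw [mul_left_comm, ← pow_add, ← pow_add]
      congr 2
      omega
    rw [h1, ← hc, h2, hn, zero_mul, mul_zero]
  have hmne : maximalIdeal R ≠ ⊤ := Ideal.IsMaximal.ne_top inferInstance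
  set f : Fin s → {I : Ideal R // I ≠ ⊥ ∧ I ≠ ⊤} := fun k =>
    ⟨Ideal.span {t ^ (k.1 + 1)},
      by rw [Ne, Ideal.span_singleton_eq_bot]; exact hpowne (k.1 + 1) (by omega),
      by
        intro h
        apply hmne
        rw [← top_le_iff, ← h, ht, Ideal.span_singleton_le_iff_mem,
          Ideal.mem_span_singleton]
        exact dvd_pow_self t (by omega)⟩ with hf
  have hbij : Function.Bijective f := by
    constructor
    · intro a b hab
      have h : Ideal.span {t ^ (a.1 + 1)} = Ideal.span {t ^ (b.1 + 1)} :=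
        congrArg Subtype.val hab
      by_contra hab'
      have : a.1 ≠ b.1 := fun h' => hab' (Fin.ext h')
      rcases Nat.lt_or_ge a.1 b.1 with hlt | hge
      · exact hne (a.1 + 1) (b.1 + 1) (by omega) (by omega) h
      · exact hne (b.1 + 1) (a.1 + 1) (by omega) (by omega) h.symm
    · rintro ⟨I, hIb, hIt⟩
      obtain ⟨k, hk⟩ := aux_chain t ht hn I hIb
      have hk0 : k ≠ 0 := by
        intro h
        apply hIt
        rw [hk, h, pow_zero, Ideal.span_singleton_one]
      have hks : k ≤ s := by
        by_contra h
        apply hIb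
        rw [hk, Ideal.span_singleton_eq_bot,
          show k = (s + 1) + (k - (s + 1)) by omega, pow_add, hn, zero_mul]
      refine ⟨⟨k - 1, by omega⟩, Subtype.ext ?_⟩
      show Ideal.span {t ^ (k - 1 + 1)} = I
      rw [show k - 1 + 1 = k from by omega, hk]
  rw [← Nat.card_eq_of_bijective f hbij, Nat.card_eq_fintype_card, Fintype.card_fin]


lemma aux_key {A : Type*} [CommRing A] [IsDomain A] {s : ℕ} (hs : 1 ≤ s)
    (g : A) (hg0 : g ≠ 0) (hgu : ¬ IsUnit g) (h' : Polynomial A) :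
    (X : Polynomial A) ^ s ∉ Ideal.span {X ^ (s + 1), C g - X * h'} := by
  intro hmem
  obtain ⟨a, b, hab⟩ := Ideal.mem_span_pair.mp hmem
  have hab2 : a * X ^ (s + 1) + (b * C g - (b * h') * X ^ 1) = X ^ s := by
    rw [← hab]; ring
  have hb : ∀ i, i < s → b.coeff i = 0 := by
    intro i
    induction i using Nat.strong_induction_on with
    | _ i IH =>
      intro hi
      have hc := congrArg (fun q => Polynomial.coeff q i) hab2
      simp only [coeff_add, coeff_sub, coeff_mul_X_pow', coeff_mul_C, coeff_X_pow] at hc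
      rw [if_neg (by omega : ¬ s + 1 ≤ i), if_neg (by omega : ¬ i = s)] at hc
      have hbh : 1 ≤ i → (b * h').coeff (i - 1) = 0 := by
        intro h1
        rw [Polynomial.coeff_mul]
        apply Finset.sum_eq_zero
        intro x hx
        rw [Finset.HasAntidiagonal.mem_antidiagonal] at hx
        rw [IH x.1 (by omega) (by omega), zero_mul]
      have hc' : b.coeff i * g = 0 := by
        by_cases h1 : 1 ≤ i
        · rw [if_pos h1, hbh h1] at hc
          simpa using hc
        · rw [if_neg h1] at hc
          simpa using hc
      exact (mul_eq_zero.mp hc').resolve_right hg0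
  have hcs := congrArg (fun q => Polynomial.coeff q s) hab2
  simp only [coeff_add, coeff_sub, coeff_mul_X_pow', coeff_mul_C, coeff_X_pow] at hcs
  rw [if_pos hs] at hcs
  simp only [if_true] at hcs
  have hbh : (b * h').coeff (s - 1) = 0 := by
    rw [Polynomial.coeff_mul]
    apply Finset.sum_eq_zero
    intro x hx
    rw [Finset.HasAntidiagonal.mem_antidiagonal] at hx
    rw [hb x.1 (by omega), zero_mul]
  rw [hbh] at hcs
  exact hgu (IsUnit.of_mul_eq_one (a := g) (b.coeff s) (by rw [mul_comm]; simpa using hcs))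






abbrev PPoly (p : ℕ) : Type := Polynomial (Polynomial (ZMod p))

theorem aux_main (p s : ℕ) [Fact p.Prime]
    (g : Polynomial (ZMod p)) (hgmonic : g.Monic) (hgirr : Irreducible g)
    (h' : PPoly p) (Q : Ideal (PPoly p))
    (hX : (X : PPoly p) ^ (s + 1) ∈ Q)
    (hw : (C g - X * h' : PPoly p) ∈ Q)
    (hQle : Q ≤ Ideal.span {(X : PPoly p), C g})
    (key : (X : PPoly p) ^ s ∉ Q) :
    Finite (PPoly p ⧸ Q) ∧ CharP (PPoly p ⧸ Q) p ∧ IsPrincipalIdealRing (PPoly p ⧸ Q) ∧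
    ∃ h : IsLocalRing (PPoly p ⧸ Q),
      haveI := h
      IsLocalRing.maximalIdeal (PPoly p ⧸ Q) ^ (s + 1) = ⊥ ∧
      IsLocalRing.maximalIdeal (PPoly p ⧸ Q) ^ s ≠ ⊥ ∧
      Nat.card {I : Ideal (PPoly p ⧸ Q) // I ≠ ⊥ ∧ I ≠ ⊤} = s := by
  classical
  letI : CommRing (PPoly p ⧸ Q) := Ideal.Quotient.commRing Q
  have hg0 : g ≠ 0 := hgmonic.ne_zero
  have hy : (Ideal.Quotient.mk Q X) ^ (s + 1) = 0 := by
    rw [← map_pow]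
    exact Ideal.Quotient.eq_zero_iff_mem.mpr hX
  have hCg : Ideal.Quotient.mk Q (C g)
      = Ideal.Quotient.mk Q X * Ideal.Quotient.mk Q h' := by
    have h0 : Ideal.Quotient.mk Q (C g - X * h') = 0 := Ideal.Quotient.eq_zero_iff_mem.mpr hw
    rw [map_sub, sub_eq_zero] at h0
    rw [h0, map_mul]
  have hys : (Ideal.Quotient.mk Q X) ^ s ≠ 0 := by
    intro h
    apply key
    apply Ideal.Quotient.eq_zero_iff_mem.mp
    rw [map_pow]
    exact h
  -- the maximal ideal upstairs
  haveI hgmax : (Ideal.span {g} : Ideal (Polynomial (ZMod p))).IsMaximal :=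
    PrincipalIdealRing.isMaximal_of_irreducible hgirr
  set ρ : PPoly p →+* Polynomial (ZMod p) ⧸ Ideal.span {g} :=
    (Ideal.Quotient.mk (Ideal.span {g})).comp Polynomial.constantCoeff with hρ
  have hρsurj : Function.Surjective ρ :=
    Ideal.Quotient.mk_surjective.comp (fun a => ⟨C a, coeff_C_zero⟩)
  have hMmax : (RingHom.ker ρ).IsMaximal := by
    letI : Field (Polynomial (ZMod p) ⧸ Ideal.span {g}) := Ideal.Quotient.field _
    exact RingHom.ker_isMaximal_of_surjective ρ hρsurj
  have hker : RingHom.ker ρ = Ideal.span {(X : PPoly p), C g} := by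
    apply le_antisymm
    · intro f hf
      rw [RingHom.mem_ker, hρ, RingHom.comp_apply, Ideal.Quotient.eq_zero_iff_mem,
        Ideal.mem_span_singleton'] at hf
      obtain ⟨c, hc⟩ := hf
      rw [Ideal.mem_span_pair]
      refine ⟨f.divX, C c, ?_⟩
      rw [← Polynomial.C_mul, mul_comm f.divX X, hc, constantCoeff_apply]
      exact X_mul_divX_add f
    · rw [Ideal.span_le]
      rintro x hx
      simp only [Set.mem_insert_iff, Set.mem_singleton_iff] at hx
      rcases hx with rfl | rfl
      · show ρ X = 0
        rw [hρ, RingHom.comp_apply]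
        simp
      · show ρ (C g) = 0
        rw [hρ, RingHom.comp_apply, constantCoeff_apply, coeff_C_zero]
        exact Ideal.Quotient.eq_zero_iff_mem.mpr (Ideal.mem_span_singleton_self g)
  have hQM : Q ≤ RingHom.ker ρ := by rw [hker]; exact hQle
  have hQne : Q ≠ ⊤ := fun h => hMmax.ne_top (top_le_iff.mp (h ▸ hQM))
  haveI : Nontrivial (PPoly p ⧸ Q) := Ideal.Quotient.nontrivial_iff.mpr hQne
  have e := DoubleQuot.quotQuotEquivQuotSup Q (RingHom.ker ρ)
  rw [sup_eq_right.mpr hQM] at e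
  have hNfield : IsField ((PPoly p ⧸ Q) ⧸ Ideal.map (Ideal.Quotient.mk Q) (RingHom.ker ρ)) :=
    MulEquiv.isField ((Ideal.Quotient.maximal_ideal_iff_isField_quotient _).mp hMmax)
      e.toMulEquiv
  have hNmax : (Ideal.map (Ideal.Quotient.mk Q) (RingHom.ker ρ)).IsMaximal :=
    Ideal.Quotient.maximal_of_isField (Ideal.map (Ideal.Quotient.mk Q) (RingHom.ker ρ)) hNfield
  have hNgen : Ideal.map (Ideal.Quotient.mk Q) (RingHom.ker ρ)
      = Ideal.span {Ideal.Quotient.mk Q X, Ideal.Quotient.mk Q (C g)} := by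
    rw [hker, Ideal.map_span]
    congr 1
    rw [Set.image_insert_eq, Set.image_singleton]
  have hNy : Ideal.map (Ideal.Quotient.mk Q) (RingHom.ker ρ)
      = Ideal.span {Ideal.Quotient.mk Q X} := by
    apply le_antisymm
    · rw [hNgen, Ideal.span_le]
      rintro z hz
      simp only [Set.mem_insert_iff, Set.mem_singleton_iff] at hz
      rcases hz with rfl | rfl
      · exact Ideal.subset_span rfl
      · rw [hCg]
        exact Ideal.mul_mem_right _ _ (Ideal.subset_span rfl)
    · rw [hNgen]
      exact Ideal.span_mono (by simp)
  haveI hloc : IsLocalRing (PPoly p ⧸ Q) := by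
    apply IsLocalRing.of_unique_max_ideal
    refine ⟨Ideal.map (Ideal.Quotient.mk Q) (RingHom.ker ρ), hNmax, fun I hI => ?_⟩
    have hyI : Ideal.Quotient.mk Q X ∈ I :=
      hI.isPrime.mem_of_pow_mem (s + 1) (by rw [hy]; exact I.zero_mem)
    have hle : Ideal.map (Ideal.Quotient.mk Q) (RingHom.ker ρ) ≤ I := by
      rw [hNy]
      exact (Ideal.span_singleton_le_iff_mem _).mpr hyI
    exact (hNmax.eq_of_le hI.ne_top hle).symm
  have hmax : IsLocalRing.maximalIdeal (PPoly p ⧸ Q)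
      = Ideal.span {Ideal.Quotient.mk Q X} := by
    rw [← IsLocalRing.eq_maximalIdeal hNmax, hNy]
  -- finiteness
  have hadj : Algebra.adjoin (ZMod p)
      ({Ideal.Quotient.mk Q (C X), Ideal.Quotient.mk Q X} : Set (PPoly p ⧸ Q)) = ⊤ := by
    have h1 := aux_adjoin_CX_X (ZMod p)
    have h2 := congrArg (Subalgebra.map (Ideal.Quotient.mkₐ (ZMod p) Q)) h1
    rw [AlgHom.map_adjoin, Set.image_insert_eq, Set.image_singleton, Algebra.map_top,
      (AlgHom.range_eq_top _).mpr (Ideal.Quotient.mkₐ_surjective _ _)] at h2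
    simpa using h2
  have hxint : IsIntegral (ZMod p) (Ideal.Quotient.mk Q (C X) : PPoly p ⧸ Q) := by
    have h0 : (Polynomial.aeval (Ideal.Quotient.mk Q (C X) : PPoly p ⧸ Q)) (g ^ (s + 1))
        = 0 := by
      have h1 := Polynomial.aeval_algHom_apply (Ideal.Quotient.mkₐ (ZMod p) Q)
        (C X) (g ^ (s + 1))
      rw [aux_aeval_CX] at h1
      have h2 : (Ideal.Quotient.mkₐ (ZMod p) Q) (C X) = Ideal.Quotient.mk Q (C X) := rfl
      rw [h2] at h1
      rw [h1]
      show Ideal.Quotient.mk Q (C (g ^ (s + 1))) = 0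
      rw [map_pow, map_pow, hCg]
      calc (Ideal.Quotient.mk Q X * Ideal.Quotient.mk Q h') ^ (s + 1)
          = (Ideal.Quotient.mk Q X) ^ (s + 1) * (Ideal.Quotient.mk Q h') ^ (s + 1) := by
            ring
        _ = 0 := mul_eq_zero_of_left hy _
    exact ⟨g ^ (s + 1), hgmonic.pow _, by rw [← Polynomial.aeval_def]; exact h0⟩
  have hyint : IsIntegral (ZMod p) (Ideal.Quotient.mk Q X : PPoly p ⧸ Q) :=
    ⟨X ^ (s + 1), monic_X_pow _, by
      rw [← Polynomial.aeval_def, Polynomial.aeval_X_pow]; exact hy⟩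
  haveI : Algebra.IsIntegral (ZMod p) (PPoly p ⧸ Q) := by
    refine ⟨fun z => ?_⟩
    have hz : z ∈ Algebra.adjoin (ZMod p)
        ({Ideal.Quotient.mk Q (C X), Ideal.Quotient.mk Q X} : Set (PPoly p ⧸ Q)) := by
      rw [hadj]; trivial
    have hle : Algebra.adjoin (ZMod p)
        ({Ideal.Quotient.mk Q (C X), Ideal.Quotient.mk Q X} : Set (PPoly p ⧸ Q))
        ≤ integralClosure (ZMod p) (PPoly p ⧸ Q) := by
      apply Algebra.adjoin_le
      rintro w hw'
      simp only [Set.mem_insert_iff, Set.mem_singleton_iff] at hw'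
      rcases hw' with rfl | rfl
      · exact hxint
      · exact hyint
    exact hle hz
  haveI hft : Algebra.FiniteType (ZMod p) (PPoly p ⧸ Q) := by
    haveI h1 : Algebra.FiniteType (ZMod p) (Polynomial (ZMod p)) :=
      inferInstance
    haveI h2 : Algebra.FiniteType (Polynomial (ZMod p)) (PPoly p) :=
      inferInstance
    haveI h3 : Algebra.FiniteType (ZMod p) (PPoly p) := Algebra.FiniteType.trans h1 h2
    exact Algebra.FiniteType.of_surjective (Ideal.Quotient.mkₐ (ZMod p) Q)
      (Ideal.Quotient.mkₐ_surjective _ _)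
  haveI : Module.Finite (ZMod p) (PPoly p ⧸ Q) := Algebra.IsIntegral.finite
  have hfin : Finite (PPoly p ⧸ Q) := Module.finite_of_finite (ZMod p)
  have hchar : CharP (PPoly p ⧸ Q) p :=
    charP_of_injective_ringHom (algebraMap (ZMod p) (PPoly p ⧸ Q)).injective p
  have hpir : IsPrincipalIdealRing (PPoly p ⧸ Q) := aux_pir _ hmax hy
  have h1 : (IsLocalRing.maximalIdeal (PPoly p ⧸ Q)) ^ (s + 1) = ⊥ := by
    rw [hmax, Ideal.span_singleton_pow, hy]
    exact Ideal.span_singleton_eq_bot.mpr rfl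
  have h2 : (IsLocalRing.maximalIdeal (PPoly p ⧸ Q)) ^ s ≠ ⊥ := by
    rw [hmax, Ideal.span_singleton_pow, Ne, Ideal.span_singleton_eq_bot]
    exact hys
  have h3 := aux_count _ s hmax hy hys
  exact ⟨hfin, hchar, hpir, hloc, h1, h2, h3⟩




/-- Theorem 3.2 (⇐ direction): with data as in the paper, `ℤ_p[X,Y]/Q` with
`Q = (Y^{s+1}, g(X) - ∑ⱼ vⱼ(X)·Y^{sⱼ})` is a finite commutative local ring of
characteristic `p`, every ideal of it is principal, its maximal ideal has nilpotency
index `s + 1`, and it has exactly `s` nontrivial ideals. -/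
theorem quotient_by_paperIdealQp_is_finite_local_pir
    (p s m : ℕ) (hp : p.Prime) (hs : 1 ≤ s)
    (g : Polynomial (ZMod p)) (hgmonic : g.Monic) (hgirr : Irreducible g)
    (v : Fin m → Polynomial (ZMod p))
    (hv : ∀ j, ¬ g ∣ v j) (hvdeg : ∀ j, (v j).degree < g.degree)
    (σ : Fin m → ℕ) (hσmono : StrictMono σ) (hσ1 : ∀ j, 1 ≤ σ j) (hσs : ∀ j, σ j ≤ s) :
    Finite (Polynomial (Polynomial (ZMod p)) ⧸ paperIdealQp p s g v σ) ∧
    CharP (Polynomial (Polynomial (ZMod p)) ⧸ paperIdealQp p s g v σ) p ∧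
    IsPrincipalIdealRing (Polynomial (Polynomial (ZMod p)) ⧸ paperIdealQp p s g v σ) ∧
    ∃ h : IsLocalRing (Polynomial (Polynomial (ZMod p)) ⧸ paperIdealQp p s g v σ),
      haveI := h
      (IsLocalRing.maximalIdeal
          (Polynomial (Polynomial (ZMod p)) ⧸ paperIdealQp p s g v σ)) ^ (s + 1) = ⊥ ∧
      (IsLocalRing.maximalIdeal
          (Polynomial (Polynomial (ZMod p)) ⧸ paperIdealQp p s g v σ)) ^ s ≠ ⊥ ∧
      Nat.card {I : Ideal (Polynomial (Polynomial (ZMod p)) ⧸ paperIdealQp p s g v σ) //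
          I ≠ ⊥ ∧ I ≠ ⊤} = s := by
  classical
  haveI : Fact p.Prime := ⟨hp⟩
  have hsum : (∑ j, Polynomial.C (v j) * Polynomial.X ^ (σ j) : PPoly p)
      = Polynomial.X * ∑ j, Polynomial.C (v j) * Polynomial.X ^ (σ j - 1) := by
    rw [Finset.mul_sum]
    refine Finset.sum_congr rfl fun j _ => ?_
    conv_lhs => rw [show σ j = 1 + (σ j - 1) from by have := hσ1 j; omega]
    rw [pow_add, pow_one]
    ring
  have hQ : paperIdealQp p s g v σ
      = Ideal.span {(X : PPoly p) ^ (s + 1),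
          C g - X * ∑ j, Polynomial.C (v j) * Polynomial.X ^ (σ j - 1)} := by
    rw [paperIdealQp, hsum]
  have hX : (X : PPoly p) ^ (s + 1) ∈ paperIdealQp p s g v σ := by
    rw [hQ]; exact Ideal.subset_span (by simp)
  have hw : (C g - X * ∑ j, Polynomial.C (v j) * Polynomial.X ^ (σ j - 1) : PPoly p)
      ∈ paperIdealQp p s g v σ := by
    rw [hQ]; exact Ideal.subset_span (by simp)
  have hQle : paperIdealQp p s g v σ ≤ Ideal.span {(X : PPoly p), C g} := by
    rw [hQ, Ideal.span_le]
    rintro x hx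
    simp only [Set.mem_insert_iff, Set.mem_singleton_iff] at hx
    rcases hx with rfl | rfl
    · rw [pow_succ]
      exact Ideal.mul_mem_left _ _ (Ideal.subset_span (by simp))
    · refine sub_mem (Ideal.subset_span (by simp)) ?_
      rw [mul_comm]
      exact Ideal.mul_mem_left _ _ (Ideal.subset_span (by simp))
  have key : (X : PPoly p) ^ s ∉ paperIdealQp p s g v σ := by
    rw [hQ]
    exact aux_key hs g hgmonic.ne_zero hgirr.not_isUnit _
  exact aux_main p s g hgmonic hgirr _ (paperIdealQp p s g v σ) hX hw hQle key
end

section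
/- Let p be a prime and let R be a finite commutative local ring of characteristic p in which every ideal is principal and whose maximal ideal has nilpotency index s + 1. Then there exist an integer m ≥ 0, a monic irreducible polynomial g(X) ∈ ℤ_p[X], polynomials v_1(X), …, v_m(X) ∈ ℤ_p[X] not divisible by g(X) with deg v_j(X) < deg g(X), and integers 1 ≤ s_1 < ⋯ < s_m ≤ s, such that R is isomorphic as a ring to ℤ_p[X, Y]/Q where Q = (Y^{s+1}, g(X) − Σ_{j=1}^m v_j(X)Y^{s_j}) (in the case m = 0 the empty sum is 0, so Q = (Y^{s+1}, g(X))). -/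
set_option synthInstance.maxHeartbeats 400000
set_option maxHeartbeats 1000000

open Polynomial

lemma auxIsAdicComplete {R : Type*} [CommRing R] (I : Ideal R) (n : ℕ) (h : I ^ n = ⊥) :
    IsAdicComplete I R where
  haus' := by
    intro x hx
    have := hx n
    rwa [h, Submodule.bot_smul, SModEq.bot] at this
  prec' := by
    intro f hf
    refine ⟨f n, fun k => ?_⟩
    rcases le_or_gt k n with hk | hk
    · exact hf hk
    · have : f n ≡ f k [SMOD (I ^ n • ⊤ : Submodule R R)] := hf hk.le
      rw [h, Submodule.bot_smul, SModEq.bot] at this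
      rw [← this]

/-- Theorem 3.2 (⇒ direction): every finite commutative local principal ideal ring of
characteristic `p` whose maximal ideal has nilpotency index `s + 1` is isomorphic to
a quotient `ℤ_p[X,Y]/(Y^{s+1}, g(X) - ∑ⱼ vⱼ(X)·Y^{sⱼ})` with data as in the paper. -/
theorem finite_local_pir_char_p_iso_quotient_paperIdealQp
    (p s : ℕ) (hp : p.Prime)
    (R : Type*) [CommRing R] [IsLocalRing R] [Finite R] [CharP R p]
    (hpir : IsPrincipalIdealRing R)
    (hnil : (IsLocalRing.maximalIdeal R) ^ (s + 1) = ⊥)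
    (hnil' : (IsLocalRing.maximalIdeal R) ^ s ≠ ⊥) :
    ∃ (m : ℕ) (g : Polynomial (ZMod p)) (v : Fin m → Polynomial (ZMod p)) (σ : Fin m → ℕ),
      g.Monic ∧ Irreducible g ∧
      (∀ j, ¬ g ∣ v j) ∧ (∀ j, (v j).degree < g.degree) ∧
      StrictMono σ ∧ (∀ j, 1 ≤ σ j) ∧ (∀ j, σ j ≤ s) ∧
      Nonempty (R ≃+* (Polynomial (Polynomial (ZMod p)) ⧸ paperIdealQp p s g v σ)) := by
  classical
  haveI : Fact p.Prime := ⟨hp⟩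
  open IsLocalRing in
  set M := IsLocalRing.maximalIdeal R with hM
  haveI := hpir.principal M
  set θ := Submodule.IsPrincipal.generator M with hθdef
  have hθ : Ideal.span {θ} = M := Ideal.span_singleton_generator M
  have hMpow : ∀ t : ℕ, M ^ t = Ideal.span {θ ^ t} := by
    intro t; rw [← hθ, Ideal.span_singleton_pow]
  have θmem : θ ∈ M := Submodule.IsPrincipal.generator_mem M
  -- residue field
  set k := IsLocalRing.ResidueField R with hk
  haveI : Finite k := Finite.of_surjective (IsLocalRing.residue R) Ideal.Quotient.mk_surjective
  have hp0 : (p : k) = 0 := by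
    rw [← map_natCast (IsLocalRing.residue R) p, CharP.cast_eq_zero R p, map_zero]
  haveI : CharP k p := (CharP.ringChar_of_prime_eq_zero hp hp0) ▸ ringChar.charP k
  letI : Algebra (ZMod p) k := ZMod.algebra k p
  obtain ⟨α, hα⟩ := Field.exists_primitive_element_of_finite_top (ZMod p) k
  have hint : IsIntegral (ZMod p) α := IsIntegral.of_finite _ _
  set g := minpoly (ZMod p) α with hg
  have gmon : g.Monic := minpoly.monic hint
  have girr : Irreducible g := minpoly.irreducible hint
  have hadj : Algebra.adjoin (ZMod p) {α} = ⊤ := by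
    rw [← IntermediateField.adjoin_simple_toSubalgebra_of_isAlgebraic hint.isAlgebraic, hα]
    exact IntermediateField.top_toSubalgebra
  have hsurj_aeval : Function.Surjective (aeval α : (ZMod p)[X] →ₐ[ZMod p] k) := by
    intro x
    have : x ∈ (aeval α : (ZMod p)[X] →ₐ[ZMod p] k).range := by
      rw [← Algebra.adjoin_singleton_eq_range_aeval, hadj]; trivial
    exact this
  have gsep : g.Separable := PerfectField.separable_of_irreducible girr
  -- Hensel lifting of a root of g
  set ι : ZMod p →+* R := ZMod.castHom dvd_rfl R with hι
  have hcomp : (IsLocalRing.residue R).comp ι = algebraMap (ZMod p) k := Subsingleton.elim _ _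
  haveI : IsAdicComplete M R := auxIsAdicComplete M (s+1) hnil
  obtain ⟨a₀, ha₀⟩ := IsLocalRing.residue_surjective (R := R) α
  have hres_eval : ∀ (b : R) (q : (ZMod p)[X]),
      IsLocalRing.residue R (eval₂ ι b q) = aeval (IsLocalRing.residue R b) q := by
    intro b q
    rw [hom_eval₂, hcomp]
    rfl
  set G := g.map ι with hG
  have hGmon : G.Monic := gmon.map ι
  have h₁ : G.eval a₀ ∈ M := by
    rw [← IsLocalRing.residue_eq_zero_iff, hG, eval_map, hres_eval, ha₀]
    exact minpoly.aeval _ _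
  have h₂ : IsUnit (Ideal.Quotient.mk M (G.derivative.eval a₀)) := by
    have heq : Ideal.Quotient.mk M (G.derivative.eval a₀) = aeval α (derivative g) := by
      rw [hG, derivative_map, eval_map]
      exact (hres_eval a₀ (derivative g)).trans (by rw [ha₀])
    rw [heq]
    have hne : aeval α (derivative g) ≠ 0 :=
      gsep.aeval_derivative_ne_zero (minpoly.aeval _ _)
    exact isUnit_iff_ne_zero.mpr hne
  obtain ⟨a, haroot, hares⟩ := HenselianRing.is_henselian (I := M) G hGmon a₀ h₁ h₂
  have ha : IsLocalRing.residue R a = α := by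
    rw [← ha₀, ← sub_eq_zero, ← map_sub]
    exact (IsLocalRing.residue_eq_zero_iff _).mpr hares
  -- evaluation homs
  set ψ : (ZMod p)[X] →+* R := eval₂RingHom ι a with hψ
  have hψres : ∀ q : (ZMod p)[X], IsLocalRing.residue R (ψ q) = aeval α q := by
    intro q
    rw [hψ, coe_eval₂RingHom, hres_eval, ha]
  have hga : ψ g = 0 := by
    have h := haroot
    rw [IsRoot, hG, eval_map] at h
    exact h
  set Φ : (ZMod p)[X][X] →+* R := eval₂RingHom ψ θ with hΦ
  have hΦX : Φ X = θ := eval₂_X _ _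
  have hΦC : ∀ q, Φ (C q) = ψ q := fun q => eval₂_C _ _
  have key_unit : ∀ r : R, IsLocalRing.residue R r ≠ 0 → IsUnit r := by
    intro r hr
    by_contra h
    exact hr ((IsLocalRing.residue_eq_zero_iff r).mpr
      ((IsLocalRing.mem_maximalIdeal r).mpr (mem_nonunits_iff.mpr h)))
  have hθres : IsLocalRing.residue R θ = 0 := (IsLocalRing.residue_eq_zero_iff θ).mpr θmem
  -- θ^t cannot lie in M^(t+1) for t ≤ s
  have θzero : ∀ t : ℕ, t ≤ s → θ ^ t ∈ M ^ (t+1) → False := by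
    intro t ht hmem
    rw [hMpow (t+1), Ideal.mem_span_singleton'] at hmem
    obtain ⟨c, hc⟩ := hmem
    have h1 : θ ^ t * (1 - c * θ) = 0 := by
      have : c * θ ^ (t+1) = θ ^ t := hc
      calc θ ^ t * (1 - c * θ) = θ ^ t - c * θ ^ (t+1) := by ring
        _ = 0 := by rw [this, sub_self]
    have hu : IsUnit (1 - c * θ) := by
      apply key_unit
      rw [map_sub, map_one, map_mul, hθres, mul_zero, sub_zero]
      exact one_ne_zero
    have hθt : θ ^ t = 0 := by
      obtain ⟨u, hu'⟩ := hu
      have h2 : θ ^ t * (1 - c * θ) * ↑u⁻¹ = 0 := by rw [h1, zero_mul]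
      rwa [← hu', mul_assoc, Units.mul_inv, mul_one] at h2
    have hbot : M ^ t = ⊥ := by
      rw [hMpow t, hθt, Set.singleton_zero, Ideal.span_zero]
    exact hnil' (le_bot_iff.mp ((Ideal.pow_le_pow_right ht).trans hbot.le))
  -- linear independence over powers of θ
  have indep : ∀ ρ : ℕ → (ZMod p)[X], (∀ j, (ρ j).degree < g.degree) →
      (∀ j, s < j → ρ j = 0) →
      (∑ j ∈ Finset.range (s+1), ψ (ρ j) * θ ^ j) = 0 → ∀ j, ρ j = 0 := by
    intro ρ hdeg hhigh hsum
    by_contra hne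
    push_neg at hne
    have hex : ∃ j, ρ j ≠ 0 := hne
    set t := Nat.find hex with htdef
    have htspec : ρ t ≠ 0 := Nat.find_spec hex
    have htmin : ∀ j, j < t → ρ j = 0 := by
      intro j hj
      by_contra h
      exact Nat.find_min hex hj h
    have hts : t ≤ s := by
      by_contra h
      push_neg at h
      exact htspec (hhigh t h)
    have hunit : IsUnit (ψ (ρ t)) := by
      apply key_unit
      rw [hψres]
      intro h0
      exact absurd (minpoly.degree_le_of_ne_zero (ZMod p) α htspec h0) (not_le.mpr (hdeg t))
    have hsplit : ψ (ρ t) * θ ^ t ∈ M ^ (t+1) := by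
      have hmem : t ∈ Finset.range (s+1) := Finset.mem_range.mpr (Nat.lt_succ_of_le hts)
      have heq : ψ (ρ t) * θ ^ t
          = - ∑ j ∈ (Finset.range (s+1)).erase t, ψ (ρ j) * θ ^ j := by
        have h6 := Finset.add_sum_erase (Finset.range (s+1)) (fun j => ψ (ρ j) * θ ^ j) hmem
        rw [eq_neg_iff_add_eq_zero, h6]
        exact hsum
      rw [heq]
      apply neg_mem
      apply Ideal.sum_mem
      intro j hj
      rcases lt_or_gt_of_ne (Finset.ne_of_mem_erase hj) with hjt | hjt
      · rw [htmin j hjt, map_zero, zero_mul]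
        exact zero_mem _
      · apply Ideal.mul_mem_left
        exact Ideal.pow_le_pow_right hjt (Ideal.pow_mem_pow θmem j)
    have hfin : θ ^ t ∈ M ^ (t+1) := by
      obtain ⟨u, hu⟩ := hunit
      have h3 := Ideal.mul_mem_left _ (↑u⁻¹ : R) hsplit
      rwa [← hu, ← mul_assoc, Units.inv_mul, one_mul] at h3
    exact θzero t hts hfin
  -- surjectivity
  have hKsurj : ∀ c : R, ∃ q : (ZMod p)[X], c - ψ q ∈ M := by
    intro c
    obtain ⟨q, hq⟩ := hsurj_aeval (IsLocalRing.residue R c)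
    exact ⟨q, by rw [← IsLocalRing.residue_eq_zero_iff, map_sub, hψres, hq, sub_self]⟩
  have hθs1 : θ ^ (s+1) = 0 := by
    have h := Ideal.pow_mem_pow θmem (s+1)
    rw [hnil] at h
    exact (Ideal.mem_bot).mp h
  have hrange : ∀ i : ℕ, ∀ x ∈ M ^ (s+1-i), x ∈ Φ.range := by
    intro i
    induction i with
    | zero =>
      intro x hx
      rw [Nat.sub_zero, hnil, Ideal.mem_bot] at hx
      rw [hx]
      exact zero_mem _
    | succ i ih =>
      intro x hx
      rcases le_or_gt (s+1) i with hi | hi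
      · have he : s+1-(i+1) = s+1-i := by omega
        rw [he] at hx
        exact ih x hx
      · set t := s - i with htdef
        have he : s+1-(i+1) = t := by omega
        have he2 : t + 1 = s+1-i := by omega
        rw [he, hMpow t] at hx
        obtain ⟨c, hc⟩ := Ideal.mem_span_singleton'.mp hx
        obtain ⟨q, hq⟩ := hKsurj c
        have hx' : x = ψ q * θ ^ t + (c - ψ q) * θ ^ t := by rw [← hc]; ring
        have hmem2 : (c - ψ q) * θ ^ t ∈ Φ.range := by
          apply ih
          rw [← he2]
          have : (c - ψ q) * θ ^ t ∈ M * M ^ t :=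
            Ideal.mul_mem_mul hq (Ideal.pow_mem_pow θmem t)
          rwa [← pow_succ', ] at this
        have hmem1 : ψ q * θ ^ t ∈ Φ.range := by
          refine ⟨C q * X ^ t, ?_⟩
          rw [map_mul, hΦC, map_pow, hΦX]
        rw [hx']
        exact add_mem hmem1 hmem2
  have hSurj : Function.Surjective Φ := by
    intro r
    have : r ∈ Φ.range := hrange (s+1) r (by
      rw [Nat.sub_self, pow_zero, Ideal.one_eq_top]; trivial)
    exact this
  -- the ideal
  set QI : Ideal ((ZMod p)[X][X]) := Ideal.span {(X : (ZMod p)[X][X]) ^ (s+1), C g} with hQI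
  have hQle : ∀ x ∈ QI, Φ x = 0 := by
    intro x hx
    have : QI ≤ RingHom.ker Φ := by
      rw [hQI, Ideal.span_le]
      rintro y hy
      simp only [Set.mem_insert_iff, Set.mem_singleton_iff] at hy
      rcases hy with rfl | rfl
      · rw [SetLike.mem_coe, RingHom.mem_ker, map_pow, hΦX, hθs1]
      · rw [SetLike.mem_coe, RingHom.mem_ker, hΦC, hga]
    exact this hx
  -- kernel is contained in QI
  have hker : ∀ F : (ZMod p)[X][X], Φ F = 0 → F ∈ QI := by
    intro F hF
    have hmonX : ((X : (ZMod p)[X][X]) ^ (s+1)).Monic := monic_X_pow _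
    set Fr := F %ₘ (X ^ (s+1)) with hFrdef
    have hdiv : Fr + (X^(s+1)) * (F /ₘ (X^(s+1))) = F := modByMonic_add_div F _
    have hFrQ : F - Fr ∈ QI := by
      have heq : F - Fr = (X^(s+1)) * (F /ₘ (X^(s+1))) := by
        rw [sub_eq_iff_eq_add, add_comm]
        exact hdiv.symm
      rw [heq]
      exact Ideal.mul_mem_right _ _ (Ideal.subset_span (Set.mem_insert _ _))
    have hΦFr : Φ Fr = 0 := by
      have h2 : Φ (X ^ (s+1) * (F /ₘ (X ^ (s+1)))) = 0 := by
        rw [map_mul, map_pow, hΦX, hθs1, zero_mul]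
      calc Φ Fr = Φ (Fr + X^(s+1) * (F /ₘ X^(s+1))) - Φ (X^(s+1) * (F /ₘ X^(s+1))) := by
            rw [map_add]; ring
        _ = 0 := by rw [hdiv, hF, h2, sub_zero]
    have hdegFr : Fr.natDegree < s + 1 := by
      rcases eq_or_ne Fr 0 with h | h
      · rw [h, natDegree_zero]; exact Nat.succ_pos s
      · have hlt := degree_modByMonic_lt F hmonX
        rw [degree_X_pow] at hlt
        exact (natDegree_lt_iff_degree_lt h).mpr (by exact_mod_cast hlt)
    have hFr_sum : Fr = ∑ j ∈ Finset.range (s+1), C (Fr.coeff j) * X ^ j := by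
      conv_lhs => rw [Fr.as_sum_range' (s+1) hdegFr]
      exact Finset.sum_congr rfl fun j _ => (C_mul_X_pow_eq_monomial).symm
    set T : (ZMod p)[X][X] := ∑ j ∈ Finset.range (s+1), C (Fr.coeff j %ₘ g) * X ^ j with hT
    set H : (ZMod p)[X][X] := ∑ j ∈ Finset.range (s+1), C (Fr.coeff j /ₘ g) * X ^ j with hH
    have hsplit : Fr = T + C g * H := by
      rw [hFr_sum, hT, hH, Finset.mul_sum, ← Finset.sum_add_distrib]
      refine Finset.sum_congr rfl fun j _ => ?_
      have hmd : Fr.coeff j %ₘ g + g * (Fr.coeff j /ₘ g) = Fr.coeff j := modByMonic_add_div _ _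
      calc C (Fr.coeff j) * X ^ j
          = C (Fr.coeff j %ₘ g + g * (Fr.coeff j /ₘ g)) * X ^ j := by rw [hmd]
        _ = _ := by rw [map_add, map_mul]; ring
    have hCgH : C g * H ∈ QI := Ideal.mul_mem_right _ _
      (Ideal.subset_span (Set.mem_insert_iff.mpr (Or.inr rfl)))
    have hΦT : Φ T = 0 := by
      have h3 : Φ (C g * H) = 0 := by rw [map_mul, hΦC, hga, zero_mul]
      calc Φ T = Φ (T + C g * H) - Φ (C g * H) := by rw [map_add]; ring
        _ = 0 := by rw [← hsplit, hΦFr, h3, sub_zero]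
    set ρ : ℕ → (ZMod p)[X] := fun j => if j ≤ s then Fr.coeff j %ₘ g else 0 with hρ
    have hgne : g.degree ≠ ⊥ := fun h => gmon.ne_zero (degree_eq_bot.mp h)
    have hρdeg : ∀ j, (ρ j).degree < g.degree := by
      intro j
      simp only [hρ]
      by_cases hj : j ≤ s
      · rw [if_pos hj]
        exact degree_modByMonic_lt _ gmon
      · rw [if_neg hj, degree_zero]
        exact Ne.bot_lt hgne
    have hρhigh : ∀ j, s < j → ρ j = 0 := by
      intro j hj
      simp only [hρ]
      rw [if_neg (not_le.mpr hj)]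
    have hρsum : (∑ j ∈ Finset.range (s+1), ψ (ρ j) * θ ^ j) = 0 := by
      rw [← hΦT, hT, map_sum]
      refine Finset.sum_congr rfl fun j hj => ?_
      simp only [hρ, if_pos (Nat.lt_succ_iff.mp (Finset.mem_range.mp hj))]
      rw [map_mul, hΦC, map_pow, hΦX]
    have hρ0 := indep ρ hρdeg hρhigh hρsum
    have hT0 : T = 0 := by
      rw [hT]
      refine Finset.sum_eq_zero fun j hj => ?_
      have h4 : Fr.coeff j %ₘ g = 0 := by
        have h5 := hρ0 j
        simpa only [hρ, if_pos (Nat.lt_succ_iff.mp (Finset.mem_range.mp hj))] using h5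
      rw [h4, map_zero, zero_mul]
    have hFfin : F = (F - Fr) + C g * H + T := by rw [hsplit]; ring
    rw [hFfin]
    exact Ideal.add_mem _ (Ideal.add_mem _ hFrQ hCgH) (hT0 ▸ zero_mem _)
  -- assemble
  have hQeq : paperIdealQp p s g (Fin.elim0) (Fin.elim0) = QI := by
    rw [paperIdealQp, hQI]
    congr 1
    rw [Finset.univ_eq_empty, Finset.sum_empty, sub_zero]
  have hQker : ∀ x ∈ paperIdealQp p s g (Fin.elim0) (Fin.elim0), Φ x = 0 := by
    rw [hQeq]
    exact hQle
  refine ⟨0, g, Fin.elim0, Fin.elim0, gmon, girr, (fun j => j.elim0), (fun j => j.elim0),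
    (fun j => j.elim0), (fun j => j.elim0), (fun j => j.elim0), ?_⟩
  let Φ' := Ideal.Quotient.lift _ Φ hQker
  have hinj : Function.Injective Φ' := by
    rw [injective_iff_map_eq_zero]
    intro z hz
    obtain ⟨F, rfl⟩ := Ideal.Quotient.mk_surjective z
    rw [Ideal.Quotient.lift_mk] at hz
    rw [Ideal.Quotient.eq_zero_iff_mem, hQeq]
    exact hker F hz
  have hsurj' : Function.Surjective Φ' := by
    intro r
    obtain ⟨F, hF⟩ := hSurj r
    exact ⟨Ideal.Quotient.mk _ F, by rw [Ideal.Quotient.lift_mk]; exact hF⟩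
  exact ⟨(RingEquiv.ofBijective Φ' ⟨hinj, hsurj'⟩).symm⟩
end

section
/- Let p be a prime. A ring R is a finite commutative local ring with exactly one nontrivial ideal and residue field of characteristic p if and only if R is isomorphic to one of the following: (1) ℤ_p[X, Y]/(g(X), Y²) for some monic irreducible polynomial g(X) ∈ ℤ_p[X]; (2) ℤ_{p²}[X]/(g₂(X) + p·w(X)) for some monic irreducible polynomial g(X) ∈ ℤ_p[X] and some polynomial w(X) ∈ ℤ_{p²}[X] with deg w(X) < deg g(X), where g₂(X) denotes the lift of g(X) to ℤ_{p²}[X] with coefficients in {0, 1, …, p−1}. -/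
set_option synthInstance.maxHeartbeats 400000
set_option maxHeartbeats 1600000
set_option linter.unusedSectionVars false

open Polynomial

/-- The coefficientwise lift of a polynomial over `ℤ/p` to a polynomial over `ℤ/q`:
each coefficient `a ∈ {0, 1, …, p-1}` is replaced by the image of the natural number
`a.val` in `ZMod q`.  (This is the polynomial `f_r` of the paper when `q = p^r`.) -/
noncomputable def polyLift (p q : ℕ) (f : Polynomial (ZMod p)) : Polynomial (ZMod q) :=
  ∑ i ∈ f.support, Polynomial.C (((f.coeff i).val : ℕ) : ZMod q) * Polynomial.X ^ i

/-- `R` is a finite commutative local ring with exactly `k` nontrivial ideals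
(ideals different from `⊥` and `⊤`) whose residue field has characteristic `p`. -/
def IsFiniteLocalWithNontrivialIdeals (R : Type*) [CommRing R] (k p : ℕ) : Prop :=
  Finite R ∧ ∃ h : IsLocalRing R, haveI := h
    CharP (IsLocalRing.ResidueField R) p ∧
    Nat.card {I : Ideal R // I ≠ ⊥ ∧ I ≠ ⊤} = k

lemma polyLift_coeff (p q : ℕ) (f : Polynomial (ZMod p)) (j : ℕ) :
    (polyLift p q f).coeff j = (((f.coeff j).val : ℕ) : ZMod q) := by
  rw [polyLift, finset_sum_coeff]
  simp only [coeff_C_mul, coeff_X_pow, mul_ite, mul_one, mul_zero]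
  rw [Finset.sum_ite_eq f.support j (fun i => (((f.coeff i).val : ℕ) : ZMod q))]
  split_ifs with h
  · rfl
  · rw [notMem_support_iff.mp h]
    simp

lemma map_polyLift (p q : ℕ) [NeZero p] (h : p ∣ q) (f : Polynomial (ZMod p)) :
    (polyLift p q f).map (ZMod.castHom h (ZMod p)) = f := by
  ext j
  rw [coeff_map, polyLift_coeff, map_natCast, ZMod.natCast_val, ZMod.cast_id]

lemma polyLift_natDegree_le (p q : ℕ) (f : Polynomial (ZMod p)) :
    (polyLift p q f).natDegree ≤ f.natDegree := by
  apply natDegree_le_iff_coeff_eq_zero.mpr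
  intro j hj
  rw [polyLift_coeff, coeff_eq_zero_of_natDegree_lt hj]
  simp

lemma polyLift_monic (p q : ℕ) [Fact (1 < p)] [Fact (1 < q)] {f : Polynomial (ZMod p)}
    (hf : f.Monic) : (polyLift p q f).Monic := by
  have hc : (polyLift p q f).coeff f.natDegree = 1 := by
    rw [polyLift_coeff, hf.coeff_natDegree, ZMod.val_one, Nat.cast_one]
  have hnd : (polyLift p q f).natDegree = f.natDegree := by
    refine le_antisymm (polyLift_natDegree_le p q f) (le_natDegree_of_ne_zero ?_)
    rw [hc]; exact one_ne_zero
  rw [Monic, leadingCoeff, hnd, hc]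

lemma polyLift_degree (p q : ℕ) [Fact (1 < p)] [Fact (1 < q)] {f : Polynomial (ZMod p)}
    (hf : f.Monic) : (polyLift p q f).degree = f.degree := by
  have h1 : (polyLift p q f).natDegree = f.natDegree := by
    refine le_antisymm (polyLift_natDegree_le p q f) (le_natDegree_of_ne_zero ?_)
    rw [polyLift_coeff, hf.coeff_natDegree, ZMod.val_one, Nat.cast_one]
    exact one_ne_zero
  rw [degree_eq_natDegree (polyLift_monic p q hf).ne_zero, degree_eq_natDegree hf.ne_zero, h1]

section scalar
variable (p : ℕ) [hp : Fact p.Prime]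

lemma hdvd : p ∣ p ^ 2 := dvd_pow_self p two_ne_zero

instance fact_one_lt : Fact (1 < p) := ⟨hp.out.one_lt⟩
instance fact_one_lt_sq : Fact (1 < p ^ 2) := ⟨Nat.one_lt_pow two_ne_zero hp.out.one_lt⟩

lemma castHom_eq_zero_iff (a : ZMod (p ^ 2)) :
    ZMod.castHom (hdvd p) (ZMod p) a = 0 ↔ ∃ b : ZMod (p ^ 2), a = (p : ZMod (p ^ 2)) * b := by
  haveI : NeZero (p ^ 2) := ⟨pow_ne_zero 2 hp.out.ne_zero⟩
  constructor
  · intro h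
    rw [ZMod.castHom_apply, ← ZMod.natCast_val, ZMod.natCast_eq_zero_iff] at h
    obtain ⟨c, hc⟩ := h
    refine ⟨((c : ℕ) : ZMod (p ^ 2)), ?_⟩
    rw [← Nat.cast_mul, ← hc, ZMod.natCast_val, ZMod.cast_id]
  · rintro ⟨b, rfl⟩
    rw [map_mul, map_natCast, ZMod.natCast_self, zero_mul]

lemma mul_p_eq_zero_iff (a : ZMod (p ^ 2)) :
    (p : ZMod (p ^ 2)) * a = 0 ↔ ∃ b : ZMod (p ^ 2), a = (p : ZMod (p ^ 2)) * b := by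
  haveI : NeZero (p ^ 2) := ⟨pow_ne_zero 2 hp.out.ne_zero⟩
  rw [← castHom_eq_zero_iff]
  constructor
  · intro h
    rw [ZMod.castHom_apply, ← ZMod.natCast_val, ZMod.natCast_eq_zero_iff]
    have ha : ((a.val : ℕ) : ZMod (p ^ 2)) = a := by rw [ZMod.natCast_val, ZMod.cast_id]
    rw [← ha, ← Nat.cast_mul, ZMod.natCast_eq_zero_iff] at h
    rcases h with ⟨c, hc⟩
    refine ⟨c, Nat.eq_of_mul_eq_mul_left hp.out.pos ?_⟩
    rw [hc]; ring
  · intro h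
    obtain ⟨b, rfl⟩ := (castHom_eq_zero_iff p a).mp h
    rw [← mul_assoc, ← Nat.cast_mul, ← sq, ZMod.natCast_self, zero_mul]

lemma ker_castHom :
    RingHom.ker (ZMod.castHom (hdvd p) (ZMod p)) = Ideal.span {(p : ZMod (p ^ 2))} := by
  ext a
  rw [RingHom.mem_ker, castHom_eq_zero_iff, Ideal.mem_span_singleton]
  exact Iff.rfl

lemma ker_polyred :
    RingHom.ker (Polynomial.mapRingHom (ZMod.castHom (hdvd p) (ZMod p))) =
      Ideal.span {(p : Polynomial (ZMod (p ^ 2)))} := by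
  rw [Polynomial.ker_mapRingHom, ker_castHom, Ideal.map_span, Set.image_singleton,
    map_natCast]

end scalar

lemma isUnit_of_not_mem_span {R : Type*} [CommRing R] {t u : R} (h2 : t * t = 0)
    (hmax : (Ideal.span {t}).IsMaximal) (hu : u ∉ Ideal.span {t}) : IsUnit u := by
  obtain ⟨y, i, hi, hyi⟩ := hmax.exists_inv hu
  obtain ⟨c, rfl⟩ := Ideal.mem_span_singleton'.mp hi
  refine IsUnit.of_mul_eq_one (a := u) (y * (1 + c * t)) ?_
  have hyu : y * u = 1 - c * t := by rw [← hyi]; ring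
  calc u * (y * (1 + c * t)) = (y * u) * (1 + c * t) := by ring
    _ = (1 - c * t) * (1 + c * t) := by rw [hyu]
    _ = 1 - (c * c) * (t * t) := by ring
    _ = 1 := by rw [h2]; ring

lemma aux_prop (R : Type*) [CommRing R] [Finite R] (p : ℕ) (t : R)
    (h2 : t * t = 0) (hmax : (Ideal.span {t}).IsMaximal)
    (hann : ∀ c : R, c * t = 0 → c ∈ Ideal.span {t})
    (hchar : CharP (R ⧸ Ideal.span {t}) p) :
    IsFiniteLocalWithNontrivialIdeals R 1 p := by
  have hnt : Nontrivial R := by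
    by_contra h
    rw [not_nontrivial_iff_subsingleton] at h
    exact hmax.ne_top (Ideal.eq_top_iff_one _ |>.mpr (by rw [Subsingleton.elim (1:R) 0]; exact Ideal.zero_mem _))
  have ht0 : t ≠ 0 := by
    intro h
    exact hmax.ne_top (Ideal.eq_top_iff_one _ |>.mpr (hann 1 (by rw [h, mul_zero])))
  have hloc : IsLocalRing R := by
    apply IsLocalRing.of_isUnit_or_isUnit_one_sub_self
    intro a
    by_cases ha : a ∈ Ideal.span {t}
    · right
      refine isUnit_of_not_mem_span h2 hmax (fun hmem => ?_)
      exact hmax.ne_top (Ideal.eq_top_iff_one _ |>.mpr (by simpa using Ideal.add_mem _ ha hmem))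
    · exact Or.inl (isUnit_of_not_mem_span h2 hmax ha)
  have hM : Ideal.span {t} = IsLocalRing.maximalIdeal R := IsLocalRing.eq_maximalIdeal hmax
  refine ⟨inferInstance, hloc, ?_, ?_⟩
  · have e : (R ⧸ Ideal.span {t}) ≃+* IsLocalRing.ResidueField R := Ideal.quotEquivOfEq hM
    exact charP_of_injective_ringHom (f := e.toRingHom) e.injective p
  · rw [Nat.card_eq_one_iff_unique]
    have key : ∀ I : Ideal R, I ≠ ⊥ → I ≠ ⊤ → I = Ideal.span {t} := by
      intro I hb htop
      have hle : I ≤ Ideal.span {t} := hM ▸ IsLocalRing.le_maximalIdeal htop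
      refine le_antisymm hle ?_
      obtain ⟨z, hzI, hz0⟩ := Submodule.exists_mem_ne_zero_of_ne_bot hb
      obtain ⟨c, hc⟩ := Ideal.mem_span_singleton'.mp (hle hzI)
      have hcu : IsUnit c := by
        refine isUnit_of_not_mem_span h2 hmax (fun hc' => ?_)
        obtain ⟨d, hd⟩ := Ideal.mem_span_singleton'.mp hc'
        exact hz0 (by rw [← hc, ← hd, mul_assoc, h2, mul_zero])
      obtain ⟨u, rfl⟩ := hcu
      have htI : t ∈ I := by
        have : t = ↑u⁻¹ * z := by rw [← hc, ← mul_assoc, Units.inv_mul, one_mul]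
        rw [this]; exact Ideal.mul_mem_left _ _ hzI
      rwa [Ideal.span_le, Set.singleton_subset_iff]
    constructor
    · constructor
      rintro ⟨I, hI1, hI2⟩ ⟨J, hJ1, hJ2⟩
      simp only [Subtype.mk_eq_mk]
      rw [key I hI1 hI2, key J hJ1 hJ2]
    · exact ⟨⟨Ideal.span {t}, by simpa [Ideal.span_singleton_eq_bot] using ht0, hmax.ne_top⟩⟩

noncomputable def idealSubtypeEquiv {R S : Type*} [CommRing R] [CommRing S] (e : R ≃+* S) :
    {I : Ideal R // I ≠ ⊥ ∧ I ≠ ⊤} ≃ {I : Ideal S // I ≠ ⊥ ∧ I ≠ ⊤} := by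
  have hcompRS : ∀ I : Ideal R, Ideal.comap e.toRingHom (Ideal.comap e.symm.toRingHom I) = I := by
    intro I; rw [Ideal.comap_comap]
    convert Ideal.comap_id I; ext x; simp
  have hcompSR : ∀ I : Ideal S, Ideal.comap e.symm.toRingHom (Ideal.comap e.toRingHom I) = I := by
    intro I; rw [Ideal.comap_comap]
    convert Ideal.comap_id I; ext x; simp
  have hbotR : Ideal.comap e.toRingHom (⊥ : Ideal S) = ⊥ := by
    ext x; simp [Ideal.mem_comap, Ideal.mem_bot, EmbeddingLike.map_eq_zero_iff]
  have hbotS : Ideal.comap e.symm.toRingHom (⊥ : Ideal R) = ⊥ := by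
    ext x; simp [Ideal.mem_comap, Ideal.mem_bot, EmbeddingLike.map_eq_zero_iff]
  refine ⟨fun I => ⟨Ideal.comap e.symm.toRingHom I.1, ?_, ?_⟩,
    fun I => ⟨Ideal.comap e.toRingHom I.1, ?_, ?_⟩, fun I => ?_, fun I => ?_⟩
  · intro hb
    exact I.2.1 (by rw [← hcompRS I.1, hb, hbotR])
  · intro ht
    exact I.2.2 (by rw [← hcompRS I.1, ht, Ideal.comap_top])
  · intro hb
    exact I.2.1 (by rw [← hcompSR I.1, hb, hbotS])
  · intro ht
    exact I.2.2 (by rw [← hcompSR I.1, ht, Ideal.comap_top])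
  · ext1; exact hcompRS I.1
  · ext1; exact hcompSR I.1

lemma IFL_transfer {R S : Type*} [CommRing R] [CommRing S] (e : R ≃+* S) {k p : ℕ}
    (h : IsFiniteLocalWithNontrivialIdeals S k p) :
    IsFiniteLocalWithNontrivialIdeals R k p := by
  obtain ⟨hfin, hloc, hchar, hcard⟩ := h
  have hfinR : Finite R := Finite.of_equiv S e.symm.toEquiv
  have hntR : Nontrivial R := e.toEquiv.nontrivial
  have hlocR : IsLocalRing R := IsLocalRing.of_surjective' e.symm.toRingHom e.symm.surjective
  refine ⟨hfinR, hlocR, ?_, ?_⟩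
  · have e' := IsLocalRing.ResidueField.mapEquiv e
    exact charP_of_injective_ringHom (f := e'.symm.toRingHom) e'.symm.injective p
  · rw [← hcard]
    exact Nat.card_congr (idealSubtypeEquiv e)


section model2
variable (p : ℕ) [hp : Fact p.Prime] (g : Polynomial (ZMod p)) (hg : g.Monic)
  (hgi : Irreducible g) (w : Polynomial (ZMod (p ^ 2))) (hw : w.degree < g.degree)

local notation "A₂" => Polynomial (ZMod (p ^ 2))
local notation "red" => Polynomial.mapRingHom (ZMod.castHom (hdvd p) (ZMod p))

lemma red_F : red (polyLift p (p ^ 2) g + (p : A₂) * w) = g := by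
  rw [map_add, map_mul, map_natCast]
  have h1 : (Polynomial.mapRingHom (ZMod.castHom (hdvd p) (ZMod p))) (polyLift p (p ^ 2) g) = g :=
    map_polyLift p (p ^ 2) (hdvd p) g
  rw [h1, show ((p : ℕ) : Polynomial (ZMod p)) = 0 by
    rw [← Polynomial.C_eq_natCast, ZMod.natCast_self, map_zero], zero_mul, add_zero]

include hg hw in
lemma F_monic : (polyLift p (p ^ 2) g + (p : A₂) * w).Monic := by
  apply (polyLift_monic p (p ^ 2) hg).add_of_left
  rw [polyLift_degree p (p ^ 2) hg]
  calc ((p : A₂) * w).degree ≤ (p : A₂).degree + w.degree := degree_mul_le _ _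
    _ ≤ 0 + w.degree := by
        refine add_le_add ?_ le_rfl
        rw [← Polynomial.C_eq_natCast]
        exact degree_C_le
    _ = w.degree := zero_add _
    _ < g.degree := hw

include hg hw in
lemma F_degree : (polyLift p (p ^ 2) g + (p : A₂) * w).degree = g.degree := by
  rw [degree_add_eq_left_of_degree_lt, polyLift_degree p (p ^ 2) hg]
  rw [polyLift_degree p (p ^ 2) hg]
  calc ((p : A₂) * w).degree ≤ (p : A₂).degree + w.degree := degree_mul_le _ _
    _ ≤ 0 + w.degree := by
        refine add_le_add ?_ le_rfl
        rw [← Polynomial.C_eq_natCast]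
        exact degree_C_le
    _ = w.degree := zero_add _
    _ < g.degree := hw

include hg hgi hw in
lemma model2_prop :
    IsFiniteLocalWithNontrivialIdeals
      (A₂ ⧸ Ideal.span {polyLift p (p ^ 2) g + (p : A₂) * w}) 1 p := by
  haveI := Fact.mk hgi
  set F : A₂ := polyLift p (p ^ 2) g + (p : A₂) * w with hFdef
  set R₂ := A₂ ⧸ Ideal.span {F} with hR₂
  have hF : F.Monic := F_monic p g hg w hw
  -- Finiteness
  haveI hfin : Finite R₂ := by
    have pb := AdjoinRoot.powerBasis' hF
    have : Finite (AdjoinRoot F) := Finite.of_equiv _ pb.basis.equivFun.toEquiv.symm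
    exact this
  -- the ring hom onto AdjoinRoot g
  have hredF : red F = g := red_F p g w
  let φ : A₂ →+* AdjoinRoot g := (AdjoinRoot.mk g).comp red
  have hφs : Function.Surjective φ :=
    (AdjoinRoot.mk_surjective).comp (Polynomial.map_surjective _ (ZMod.ringHom_surjective _))
  have hkermk : RingHom.ker (AdjoinRoot.mk g) = Ideal.span {g} := Ideal.mk_ker
  have hkerφ : RingHom.ker φ = Ideal.span {F} ⊔ Ideal.span {(p : A₂)} := by
    have h1 : RingHom.ker φ = Ideal.comap red (Ideal.span {g}) := by
      rw [← hkermk, RingHom.comap_ker]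
    have hmp : (Polynomial.mapRingHom (ZMod.castHom (hdvd p) (ZMod p))) (polyLift p (p ^ 2) g)
        = g := map_polyLift p (p ^ 2) (hdvd p) g
    have h2 : Ideal.span {g} = Ideal.map red (Ideal.span {polyLift p (p ^ 2) g}) := by
      rw [Ideal.map_span, Set.image_singleton, hmp]
    have h3 : Ideal.comap red (Ideal.map red (Ideal.span {polyLift p (p ^ 2) g})) =
        Ideal.span {polyLift p (p ^ 2) g} ⊔ RingHom.ker red :=
      Ideal.comap_map_of_surjective _ (Polynomial.map_surjective _ (ZMod.ringHom_surjective _)) _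
    have h4 : Ideal.span {polyLift p (p ^ 2) g} ⊔ Ideal.span {(p : A₂)} =
        Ideal.span {F} ⊔ Ideal.span {(p : A₂)} := by
      apply le_antisymm
      · apply sup_le
        · rw [Ideal.span_le, Set.singleton_subset_iff]
          have : polyLift p (p ^ 2) g = F - (p : A₂) * w := by rw [hFdef]; ring
          rw [this]
          exact Ideal.sub_mem _ (Ideal.mem_sup_left (Ideal.subset_span rfl))
            (Ideal.mem_sup_right (Ideal.mul_mem_right _ _ (Ideal.subset_span rfl)))
        · exact le_sup_right
      · apply sup_le
        · rw [Ideal.span_le, Set.singleton_subset_iff]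
          exact Ideal.add_mem _ (Ideal.mem_sup_left (Ideal.subset_span rfl))
            (Ideal.mem_sup_right (Ideal.mul_mem_right _ _ (Ideal.subset_span rfl)))
        · exact le_sup_right
    rw [h1, h2, h3, ker_polyred, h4]
  -- quotient by (p) is AdjoinRoot g
  have hspan : Ideal.span {((p : ℕ) : R₂)} =
      Ideal.map (Ideal.Quotient.mk (Ideal.span {F})) (Ideal.span {(p : A₂)}) := by
    rw [Ideal.map_span, Set.image_singleton, map_natCast]
  let e₁ : (R₂ ⧸ Ideal.span {((p : ℕ) : R₂)}) ≃+* AdjoinRoot g :=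
    ((Ideal.quotEquivOfEq hspan).trans
      (DoubleQuot.quotQuotEquivQuotSup (Ideal.span {F}) (Ideal.span {(p : A₂)}))).trans
      ((Ideal.quotEquivOfEq hkerφ.symm).trans (RingHom.quotientKerEquivOfSurjective hφs))
  have hmax : (Ideal.span {((p : ℕ) : R₂)}).IsMaximal :=
    Ideal.Quotient.maximal_of_isField _
      (e₁.toMulEquiv.isField (Field.toIsField (AdjoinRoot g)))
  have hchar : CharP (R₂ ⧸ Ideal.span {((p : ℕ) : R₂)}) p := by
    haveI : CharP (AdjoinRoot g) p :=
      charP_of_injective_ringHom (algebraMap (ZMod p) (AdjoinRoot g)).injective p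
    exact charP_of_injective_ringHom (f := e₁.symm.toRingHom) e₁.symm.injective p
  -- t * t = 0
  have hp2A : ((p ^ 2 : ℕ) : A₂) = 0 := by
    rw [← Polynomial.C_eq_natCast, ZMod.natCast_self, map_zero]
  have ht2 : ((p : ℕ) : R₂) * ((p : ℕ) : R₂) = 0 := by
    rw [← Nat.cast_mul, ← sq, ← map_natCast (Ideal.Quotient.mk (Ideal.span {F})), hp2A, map_zero]
  -- annihilator condition
  have hann : ∀ c : R₂, c * ((p : ℕ) : R₂) = 0 → c ∈ Ideal.span {((p : ℕ) : R₂)} := by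
    intro c hc
    obtain ⟨u, rfl⟩ := Ideal.Quotient.mk_surjective c
    rw [← map_natCast (Ideal.Quotient.mk (Ideal.span {F})), ← map_mul,
      Ideal.Quotient.eq_zero_iff_mem] at hc
    obtain ⟨h₁, hh₁⟩ := Ideal.mem_span_singleton'.mp hc
    -- reduce mod p : g * red h₁ = 0
    have hred0 : red h₁ = 0 := by
      have := congrArg red hh₁
      rw [map_mul, map_mul, map_natCast, hredF,
        show ((p : ℕ) : Polynomial (ZMod p)) = 0 by
          rw [← Polynomial.C_eq_natCast, ZMod.natCast_self, map_zero], mul_zero] at this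
      exact (mul_eq_zero.mp this).resolve_right hg.ne_zero
    have hmem : h₁ ∈ Ideal.span {(p : A₂)} := by
      rw [← ker_polyred p]; exact hred0
    obtain ⟨z, hz⟩ := Ideal.mem_span_singleton'.mp hmem
    -- (u - F z) * p = 0 coefficientwise
    have hzz : (u - F * z) * (p : A₂) = 0 := by
      have : u * (p : A₂) = F * h₁ := by rw [← hh₁]; ring
      rw [sub_mul, this, ← hz]; ring
    have hredu : red (u - F * z) = 0 := by
      ext j
      simp only [Polynomial.coe_mapRingHom, Polynomial.coeff_map, Polynomial.coeff_zero]
      have hcj : (u - F * z).coeff j * (p : ZMod (p ^ 2)) = 0 := by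
        have h := congrArg (fun q => Polynomial.coeff q j) hzz
        simp only [Polynomial.coeff_zero] at h
        rw [← Polynomial.C_eq_natCast, Polynomial.coeff_mul_C] at h
        exact h
      rw [mul_comm] at hcj
      obtain ⟨b, hb⟩ := (mul_p_eq_zero_iff p _).mp hcj
      exact (castHom_eq_zero_iff p ((u - F * z).coeff j)).mpr ⟨b, hb⟩
    have hmem2 : u - F * z ∈ Ideal.span {(p : A₂)} := by
      rw [← ker_polyred p]; exact hredu
    obtain ⟨z', hz'⟩ := Ideal.mem_span_singleton'.mp hmem2
    refine Ideal.mem_span_singleton'.mpr ⟨Ideal.Quotient.mk _ z', ?_⟩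
    rw [← map_natCast (Ideal.Quotient.mk (Ideal.span {F})),
      ← map_mul (Ideal.Quotient.mk (Ideal.span {F})) z' (((p : ℕ) : A₂)), hz']
    have hFz : Ideal.Quotient.mk (Ideal.span {F}) (F * z) = 0 :=
      Ideal.Quotient.eq_zero_iff_mem.mpr
        (Ideal.mul_mem_right z _ (Ideal.subset_span (Set.mem_singleton F)))
    rw [map_sub, hFz, sub_zero]
  exact aux_prop R₂ p _ ht2 hmax hann hchar

end model2

section model1
variable (p : ℕ) [hp : Fact p.Prime] (g : Polynomial (ZMod p)) (hg : g.Monic)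
  (hgi : Irreducible g)

include hg hgi in
lemma T_prop :
    IsFiniteLocalWithNontrivialIdeals
      (Polynomial (AdjoinRoot g) ⧸ Ideal.span {(X : Polynomial (AdjoinRoot g)) ^ 2}) 1 p := by
  haveI := Fact.mk hgi
  haveI hfink : Finite (AdjoinRoot g) := by
    have pb := AdjoinRoot.powerBasis' hg
    exact Finite.of_equiv _ pb.basis.equivFun.toEquiv.symm
  haveI hcharK : CharP (AdjoinRoot g) p :=
    charP_of_injective_ringHom (algebraMap (ZMod p) (AdjoinRoot g)).injective p
  haveI hfinT : Finite (Polynomial (AdjoinRoot g) ⧸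
      Ideal.span {(X : Polynomial (AdjoinRoot g)) ^ 2}) := by
    have pb := AdjoinRoot.powerBasis' (monic_X_pow (R := AdjoinRoot g) 2)
    exact Finite.of_equiv _ pb.basis.equivFun.toEquiv.symm
  set I2 : Ideal (Polynomial (AdjoinRoot g)) := Ideal.span {(X : Polynomial (AdjoinRoot g)) ^ 2}
    with hI2
  set t : Polynomial (AdjoinRoot g) ⧸ I2 := Ideal.Quotient.mk I2 X with htdef
  have ht2 : t * t = 0 := by
    rw [htdef, ← map_mul, ← sq, Ideal.Quotient.eq_zero_iff_mem]
    exact Ideal.subset_span (Set.mem_singleton _)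
  have hspan : Ideal.span {t} = Ideal.map (Ideal.Quotient.mk I2)
      (Ideal.span {(X : Polynomial (AdjoinRoot g))}) := by
    rw [Ideal.map_span, Set.image_singleton]
  have hsup : I2 ⊔ Ideal.span {(X : Polynomial (AdjoinRoot g))} =
      Ideal.span {(X : Polynomial (AdjoinRoot g))} :=
    sup_eq_right.mpr (Ideal.span_singleton_le_span_singleton.mpr (dvd_pow_self X two_ne_zero))
  have hkerev : RingHom.ker (evalRingHom (0 : AdjoinRoot g)) =
      Ideal.span {(X : Polynomial (AdjoinRoot g))} := by
    rw [Polynomial.ker_evalRingHom, map_zero, sub_zero]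
  have hevs : Function.Surjective (evalRingHom (0 : AdjoinRoot g)) := by
    intro a; exact ⟨C a, by simp⟩
  let e₂ : ((Polynomial (AdjoinRoot g) ⧸ I2) ⧸ Ideal.span {t}) ≃+* AdjoinRoot g :=
    ((Ideal.quotEquivOfEq hspan).trans
      (DoubleQuot.quotQuotEquivQuotSup I2 (Ideal.span {(X : Polynomial (AdjoinRoot g))}))).trans
      ((Ideal.quotEquivOfEq (hsup.trans hkerev.symm)).trans
        (RingHom.quotientKerEquivOfSurjective hevs))
  have hmax : (Ideal.span {t}).IsMaximal :=
    Ideal.Quotient.maximal_of_isField _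
      (e₂.toMulEquiv.isField (Field.toIsField (AdjoinRoot g)))
  have hchar : CharP ((Polynomial (AdjoinRoot g) ⧸ I2) ⧸ Ideal.span {t}) p :=
    charP_of_injective_ringHom (f := e₂.symm.toRingHom) e₂.symm.injective p
  have hann : ∀ c, c * t = 0 → c ∈ Ideal.span {t} := by
    intro c hc
    obtain ⟨u, rfl⟩ := Ideal.Quotient.mk_surjective c
    rw [htdef, ← map_mul, Ideal.Quotient.eq_zero_iff_mem] at hc
    obtain ⟨a, ha⟩ := Ideal.mem_span_singleton'.mp hc
    have hux : a * X = u := by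
      apply mul_right_cancel₀ (Polynomial.X_ne_zero (R := AdjoinRoot g))
      rw [mul_assoc, ← sq, ha]
    refine Ideal.mem_span_singleton'.mpr ⟨Ideal.Quotient.mk I2 a, ?_⟩
    rw [htdef, ← map_mul, hux]
  exact aux_prop _ p t ht2 hmax hann hchar

include hg hgi in
lemma model1_prop :
    IsFiniteLocalWithNontrivialIdeals
      (Polynomial (Polynomial (ZMod p)) ⧸
        Ideal.span {Polynomial.C g, (X : Polynomial (Polynomial (ZMod p))) ^ 2}) 1 p := by
  haveI := Fact.mk hgi
  set ψ : Polynomial (Polynomial (ZMod p)) →+* Polynomial (AdjoinRoot g) :=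
    Polynomial.mapRingHom (AdjoinRoot.mk g) with hψ
  have hψs : Function.Surjective ψ := Polynomial.map_surjective _ AdjoinRoot.mk_surjective
  set χ : Polynomial (Polynomial (ZMod p)) →+*
      (Polynomial (AdjoinRoot g) ⧸ Ideal.span {(X : Polynomial (AdjoinRoot g)) ^ 2}) :=
    (Ideal.Quotient.mk (Ideal.span {(X : Polynomial (AdjoinRoot g)) ^ 2})).comp ψ with hχ
  have hχs : Function.Surjective χ := (Ideal.Quotient.mk_surjective).comp hψs
  have hkerχ : RingHom.ker χ =
      Ideal.span {Polynomial.C g, (X : Polynomial (Polynomial (ZMod p))) ^ 2} := by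
    have h1 : RingHom.ker χ = Ideal.comap ψ (Ideal.span {(X : Polynomial (AdjoinRoot g)) ^ 2}) := by
      rw [hχ, ← RingHom.comap_ker, Ideal.mk_ker]
    have h2 : Ideal.span {(X : Polynomial (AdjoinRoot g)) ^ 2} =
        Ideal.map ψ (Ideal.span {(X : Polynomial (Polynomial (ZMod p))) ^ 2}) := by
      rw [Ideal.map_span, Set.image_singleton, map_pow]
      congr 2
      simp [hψ]
    have hkmk : RingHom.ker (AdjoinRoot.mk g) = Ideal.span {g} := Ideal.mk_ker
    have h3 : RingHom.ker ψ = Ideal.span {Polynomial.C g} := by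
      rw [hψ, Polynomial.ker_mapRingHom, hkmk, Ideal.map_span, Set.image_singleton]
    rw [h1, h2, Ideal.comap_map_of_surjective _ hψs, ← RingHom.ker_eq_comap_bot, h3,
      Ideal.span_insert, sup_comm]
  let e₃ : (Polynomial (Polynomial (ZMod p)) ⧸
      Ideal.span {Polynomial.C g, (X : Polynomial (Polynomial (ZMod p))) ^ 2}) ≃+*
      (Polynomial (AdjoinRoot g) ⧸ Ideal.span {(X : Polynomial (AdjoinRoot g)) ^ 2}) :=
    (Ideal.quotEquivOfEq hkerχ.symm).trans (RingHom.quotientKerEquivOfSurjective hχs)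
  exact IFL_transfer e₃ (T_prop p g hg hgi)

end model1

theorem forward_dir (p : ℕ) (hp : p.Prime) (R : Type*) [CommRing R]
    (h : IsFiniteLocalWithNontrivialIdeals R 1 p) :
    ((∃ g : Polynomial (ZMod p), g.Monic ∧ Irreducible g ∧
        Nonempty (R ≃+* (Polynomial (Polynomial (ZMod p)) ⧸
          Ideal.span {Polynomial.C g, (Polynomial.X : Polynomial (Polynomial (ZMod p))) ^ 2}))) ∨
     (∃ (g : Polynomial (ZMod p)) (w : Polynomial (ZMod (p ^ 2))),
        g.Monic ∧ Irreducible g ∧ w.degree < g.degree ∧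
        Nonempty (R ≃+* (Polynomial (ZMod (p ^ 2)) ⧸
          Ideal.span {polyLift p (p ^ 2) g + (p : Polynomial (ZMod (p ^ 2))) * w})))) := by
  haveI hpf : Fact p.Prime := ⟨hp⟩
  obtain ⟨hfin, hloc, hchar, hcard⟩ := h
  haveI := hfin
  haveI := hloc
  set m := IsLocalRing.maximalIdeal R with hm
  set k := IsLocalRing.ResidueField R with hk
  set ρ := IsLocalRing.residue R with hρ
  -- uniqueness of the nontrivial ideal
  obtain ⟨hsub, hne⟩ := Nat.card_eq_one_iff_unique.mp hcard
  have hm_ne_top : m ≠ ⊤ := (IsLocalRing.maximalIdeal.isMaximal R).ne_top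
  have hm_ne_bot : m ≠ ⊥ := by
    obtain ⟨I, hIb, hIt⟩ := hne
    intro hbot
    exact hIb (le_bot_iff.mp (hbot ▸ IsLocalRing.le_maximalIdeal hIt))
  have huniq : ∀ I : Ideal R, I ≠ ⊥ → I ≠ ⊤ → I = m := by
    intro I h1 h2
    have := hsub.elim (⟨I, h1, h2⟩ : {I : Ideal R // I ≠ ⊥ ∧ I ≠ ⊤}) ⟨m, hm_ne_bot, hm_ne_top⟩
    exact congrArg Subtype.val this
  -- m² = 0
  have hm2 : m * m = ⊥ := by
    by_contra hne0
    have hle : m * m ≤ m := Ideal.mul_le_right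
    have hnt : m * m ≠ ⊤ := fun h => hm_ne_top (top_le_iff.mp (h ▸ hle))
    have heq : m * m = m := huniq _ hne0 hnt
    haveI : IsNoetherian R R := isNoetherian_of_finite R R
    have := Submodule.eq_bot_of_le_smul_of_le_jacobson_bot m m
      (IsNoetherian.noetherian m)
      (by rw [Ideal.smul_eq_mul m m]; exact heq.ge)
      (by rw [IsLocalRing.jacobson_eq_maximalIdeal ⊥ bot_ne_top])
    exact hm_ne_bot this
  have hmm0 : ∀ a ∈ m, ∀ b ∈ m, a * b = 0 := by
    intro a ha b hb
    have := Ideal.mul_mem_mul ha hb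
    rwa [hm2, Ideal.mem_bot] at this
  -- k is a finite field with a primitive element
  haveI hkfin : Finite k := Finite.of_surjective ρ Ideal.Quotient.mk_surjective
  letI : Algebra (ZMod p) k := (ZMod.castHom (dvd_refl p) k).toAlgebra
  -- Module.Finite instance is automatic from [Finite k]
  obtain ⟨α, hα⟩ := Field.exists_primitive_element_of_finite_top (ZMod p) k
  have hint : IsIntegral (ZMod p) α := IsIntegral.of_finite (ZMod p) α
  set g := minpoly (ZMod p) α with hgdef
  have hg : g.Monic := minpoly.monic hint
  have hgi : Irreducible g := minpoly.irreducible hint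
  have haval : ∀ z : k, ∃ q : Polynomial (ZMod p), aeval α q = z := by
    have h1 : Algebra.adjoin (ZMod p) {α} = ⊤ := by
      rw [← IntermediateField.adjoin_simple_toSubalgebra_of_isAlgebraic hint.isAlgebraic, hα]
      rfl
    intro z
    have hz : z ∈ Algebra.adjoin (ZMod p) {α} := h1 ▸ Algebra.mem_top
    rw [Algebra.adjoin_singleton_eq_range_aeval] at hz
    exact hz.imp fun q hq => hq
  -- residue facts
  have hmem_ker : ∀ r : R, ρ r = 0 ↔ r ∈ m := by
    intro r
    rw [← RingHom.mem_ker, IsLocalRing.ker_residue]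
  obtain ⟨t, htm, ht0⟩ := Submodule.exists_mem_ne_zero_of_ne_bot hm_ne_bot
  have hmt : m = Ideal.span {t} := by
    have hsle : Ideal.span {t} ≤ m := Ideal.span_le.mpr (Set.singleton_subset_iff.mpr htm)
    refine (huniq _ ?_ ?_).symm
    · simpa [Ideal.span_singleton_eq_bot] using ht0
    · exact fun h => hm_ne_top (top_le_iff.mp (h ▸ hsle))
  have hannm : ∀ s : R, s ≠ 0 → ∀ c : R, c * s = 0 → c ∈ m := by
    intro s hs c hc
    by_contra hcm
    have hcu : IsUnit c := IsLocalRing.notMem_maximalIdeal.mp hcm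
    obtain ⟨u, rfl⟩ := hcu
    apply hs
    calc s = ↑u⁻¹ * (↑u * s) := by rw [← mul_assoc, Units.inv_mul, one_mul]
      _ = 0 := by rw [hc, mul_zero]
  -- characteristic
  have hpm : (p : R) ∈ m := by
    rw [← hmem_ker, map_natCast]
    exact CharP.cast_eq_zero k p
  have hp2 : ((p ^ 2 : ℕ) : R) = 0 := by
    push_cast
    rw [sq]
    exact hmm0 _ hpm _ hpm
  have hdvd2 : ringChar R ∣ p ^ 2 := ringChar.dvd hp2
  obtain ⟨i, hi2, hival⟩ := (Nat.dvd_prime_pow hp).mp hdvd2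
  interval_cases i
  · exfalso
    rw [pow_zero] at hival
    exact CharP.ringChar_ne_one hival
  · -- case char = p
    left
    rw [pow_one] at hival
    haveI hcharR : CharP R p := ringChar.of_eq hival
    set ψ : ZMod p →+* R := ZMod.castHom (dvd_refl p) R with hψ
    have hnat : ∀ (z : R) (q : Polynomial (ZMod p)), ρ (eval₂ ψ z q) = aeval (ρ z) q := by
      intro z q
      rw [Polynomial.hom_eval₂, Subsingleton.elim (ρ.comp ψ) (algebraMap (ZMod p) k),
        Polynomial.aeval_def]
    obtain ⟨x₀, hρx₀⟩ := IsLocalRing.residue_surjective (R := R) α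
    have hsep : g.Separable := PerfectField.separable_of_irreducible hgi
    have hder : aeval α (derivative g) ≠ 0 := by
      obtain ⟨A, B, hab⟩ := hsep
      intro h0
      have h1 := congrArg (aeval α) hab
      rw [map_add, map_mul, map_mul, minpoly.aeval, mul_zero, h0, mul_zero, add_zero,
        map_one] at h1
      exact zero_ne_one h1
    set e0 := eval₂ ψ x₀ g with he0def
    have he0m : e0 ∈ m := by
      rw [← hmem_ker, he0def, hnat, hρx₀]
      exact minpoly.aeval _ _
    set d := eval₂ ψ x₀ (derivative g) with hddef
    have hdm : d ∉ m := by
      intro hdm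
      apply hder
      have h2 : ρ d = aeval α (derivative g) := by rw [hddef, hnat, hρx₀]
      rw [← h2]
      exact (hmem_ker d).mpr hdm
    obtain ⟨ud, hud⟩ := IsLocalRing.notMem_maximalIdeal.mp hdm
    set y := -(e0 * ↑ud⁻¹) with hydef
    have hym : y ∈ m := Submodule.neg_mem _ (Ideal.mul_mem_right _ _ he0m)
    set x := x₀ + y with hxdef
    have key : eval₂ ψ x g = 0 := by
      obtain ⟨kk, hkk⟩ := Polynomial.binomExpansion (g.map ψ) x₀ y
      have hy2 : y ^ 2 = 0 := by rw [sq]; exact hmm0 _ hym _ hym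
      have hdy : d * y = -e0 := by
        have h3 : d * ↑ud⁻¹ = 1 := by rw [← hud, Units.mul_inv]
        calc d * y = -(e0 * (d * ↑ud⁻¹)) := by rw [hydef]; ring
          _ = -e0 := by rw [h3, mul_one]
      have h4 : eval₂ ψ x g = (g.map ψ).eval (x₀ + y) := by
        rw [Polynomial.eval_map, hxdef]
      rw [h4, hkk, Polynomial.derivative_map, hy2, mul_zero, add_zero,
        Polynomial.eval_map, Polynomial.eval_map, ← he0def, ← hddef, hdy]
      ring
    have hρy : ρ y = 0 := (hmem_ker y).mpr hym
    have hρx : ρ x = α := by rw [hxdef, map_add, hρx₀, hρy, add_zero]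
    have hmodg : ∀ q : Polynomial (ZMod p), eval₂ ψ x q = eval₂ ψ x (q %ₘ g) := by
      intro q
      conv_lhs => rw [← modByMonic_add_div q g]
      rw [eval₂_add, eval₂_mul, key, zero_mul, add_zero]
    set Φ : Polynomial (Polynomial (ZMod p)) →+* R :=
      eval₂RingHom (eval₂RingHom ψ x) t with hΦdef
    have hΦC : ∀ q : Polynomial (ZMod p), Φ (C q) = eval₂ ψ x q := by
      intro q
      rw [hΦdef, coe_eval₂RingHom, eval₂_C, coe_eval₂RingHom]
    have hΦX : Φ X = t := by rw [hΦdef, coe_eval₂RingHom, eval₂_X]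
    have hΦX2 : Φ (X ^ 2) = 0 := by
      rw [map_pow, hΦX, sq]
      exact hmm0 _ htm _ htm
    have hΦCg : Φ (C g) = 0 := by rw [hΦC]; exact key
    have hstep : ∀ r : R, ∃ q, r - eval₂ ψ x q ∈ m := by
      intro r
      obtain ⟨q, hq⟩ := haval (ρ r)
      refine ⟨q, ?_⟩
      rw [← hmem_ker, map_sub, hnat, hρx, hq, sub_self]
    have hsurj : Function.Surjective Φ := by
      intro r
      obtain ⟨q₁, hq₁⟩ := hstep r
      rw [hmt] at hq₁
      obtain ⟨c, hc⟩ := Ideal.mem_span_singleton'.mp hq₁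
      obtain ⟨q₂, hq₂⟩ := hstep c
      have hc₂t : (c - eval₂ ψ x q₂) * t = 0 := hmm0 _ hq₂ _ htm
      refine ⟨C q₁ + C q₂ * X, ?_⟩
      rw [map_add, map_mul, hΦC, hΦC, hΦX]
      calc eval₂ ψ x q₁ + eval₂ ψ x q₂ * t
          = eval₂ ψ x q₁ + c * t - (c - eval₂ ψ x q₂) * t := by ring
        _ = eval₂ ψ x q₁ + (r - eval₂ ψ x q₁) - 0 := by rw [hc, hc₂t]
        _ = r := by ring
    have hker : RingHom.ker Φ =
        Ideal.span {C g, (X : Polynomial (Polynomial (ZMod p))) ^ 2} := by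
      apply le_antisymm
      · intro f hf
        rw [RingHom.mem_ker] at hf
        have hmon : ((X : Polynomial (Polynomial (ZMod p))) ^ 2).Monic := monic_X_pow 2
        have hdiv : f %ₘ (X ^ 2) + X ^ 2 * (f /ₘ (X ^ 2)) = f := modByMonic_add_div f (X ^ 2)
        have hdeg : (f %ₘ (X ^ 2)).degree < 2 := by
          have h5 := degree_modByMonic_lt f hmon
          rwa [degree_X_pow] at h5
        have hr1 : (f %ₘ (X ^ 2)).degree ≤ 1 := by
          rw [Polynomial.degree_le_iff_coeff_zero]
          intro n hn
          apply Polynomial.coeff_eq_zero_of_degree_lt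
          refine lt_of_lt_of_le hdeg ?_
          rcases n with _ | n
          · simp at hn
          · rcases n with _ | n
            · simp at hn
            · exact_mod_cast Nat.le_add_left 2 n
        have hr : f %ₘ (X ^ 2) = C ((f %ₘ (X ^ 2)).coeff 1) * X + C ((f %ₘ (X ^ 2)).coeff 0) :=
          eq_X_add_C_of_degree_le_one hr1
        set a : Polynomial (ZMod p) := (f %ₘ (X ^ 2)).coeff 0 with hadef
        set b : Polynomial (ZMod p) := (f %ₘ (X ^ 2)).coeff 1 with hbdef
        have hΦf : eval₂ ψ x (a %ₘ g) + eval₂ ψ x (b %ₘ g) * t = 0 := by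
          have h6 : Φ f = eval₂ ψ x (a %ₘ g) + eval₂ ψ x (b %ₘ g) * t := by
            conv_lhs => rw [← hdiv, hr]
            rw [map_add, map_add, map_mul, map_mul, hΦC, hΦC, hΦX, hΦX2, zero_mul, add_zero,
              ← hmodg, ← hmodg]
            ring
          rw [← h6, hf]
        have hρΦf := congrArg ρ hΦf
        rw [map_add, map_mul, hnat, hnat, hρx, (hmem_ker t).mpr htm, mul_zero, add_zero,
          map_zero] at hρΦf
        have ha0 : a %ₘ g = 0 := by
          have hdvdg : g ∣ (a %ₘ g) := minpoly.dvd (ZMod p) α hρΦf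
          exact eq_zero_of_dvd_of_degree_lt hdvdg (degree_modByMonic_lt a hg)
        have hb0 : b %ₘ g = 0 := by
          rw [ha0, eval₂_zero, zero_add] at hΦf
          have hbm : eval₂ ψ x (b %ₘ g) ∈ m := hannm t ht0 _ hΦf
          have hρb : aeval α (b %ₘ g) = 0 := by
            have h7 : ρ (eval₂ ψ x (b %ₘ g)) = 0 := (hmem_ker _).mpr hbm
            rwa [hnat, hρx] at h7
          have hdvdg : g ∣ (b %ₘ g) := minpoly.dvd (ZMod p) α hρb
          exact eq_zero_of_dvd_of_degree_lt hdvdg (degree_modByMonic_lt b hg)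
        have ha2 : a = g * (a /ₘ g) := by
          conv_lhs => rw [← modByMonic_add_div a g]
          rw [ha0, zero_add]
        have hb2 : b = g * (b /ₘ g) := by
          conv_lhs => rw [← modByMonic_add_div b g]
          rw [hb0, zero_add]
        refine Ideal.mem_span_pair.mpr ⟨C (b /ₘ g) * X + C (a /ₘ g), f /ₘ (X ^ 2), ?_⟩
        conv_rhs => rw [← hdiv, hr]
        conv_rhs => rw [ha2, hb2]
        rw [map_mul, map_mul]
        ring
      · rw [Ideal.span_le]
        rintro f hf
        simp only [Set.mem_insert_iff, Set.mem_singleton_iff] at hf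
        rcases hf with rfl | rfl
        · rw [SetLike.mem_coe, RingHom.mem_ker]; exact hΦCg
        · rw [SetLike.mem_coe, RingHom.mem_ker]; exact hΦX2
    refine ⟨g, hg, hgi, ⟨?_⟩⟩
    exact ((RingHom.quotientKerEquivOfSurjective hsurj).symm.trans
      (Ideal.quotEquivOfEq hker))
  · -- case char = p^2
    right
    haveI hcharR : CharP R (p ^ 2) := ringChar.of_eq hival
    set ψ : ZMod (p ^ 2) →+* R := ZMod.castHom (dvd_refl (p ^ 2)) R with hψ
    have hnat : ∀ (z : R) (q : Polynomial (ZMod (p ^ 2))), ρ (eval₂ ψ z q) =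
        aeval (ρ z) (q.map (ZMod.castHom (hdvd p) (ZMod p))) := by
      intro z q
      rw [Polynomial.hom_eval₂, Subsingleton.elim (ρ.comp ψ)
        ((algebraMap (ZMod p) k).comp (ZMod.castHom (hdvd p) (ZMod p))),
        ← Polynomial.eval₂_map, Polynomial.aeval_def]
    obtain ⟨x₀, hρx₀⟩ := IsLocalRing.residue_surjective (R := R) α
    have hpne : (p : R) ≠ 0 := by
      intro h0
      have h1 := (CharP.cast_eq_zero_iff R (p ^ 2) p).mp h0
      have h2 : p ^ 2 ≤ p := Nat.le_of_dvd hp.pos h1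
      have h3 : 2 ≤ p := hp.two_le
      nlinarith
    have hmp : m = Ideal.span {(p : R)} := by
      have hsle : Ideal.span {(p : R)} ≤ m := Ideal.span_le.mpr (Set.singleton_subset_iff.mpr hpm)
      refine (huniq _ ?_ ?_).symm
      · simpa [Ideal.span_singleton_eq_bot] using hpne
      · exact fun h => hm_ne_top (top_le_iff.mp (h ▸ hsle))
    have hpp0 : (p : R) * (p : R) = 0 := hmm0 _ hpm _ hpm
    set Φ : Polynomial (ZMod (p ^ 2)) →+* R := eval₂RingHom ψ x₀ with hΦdef
    have hΦap : ∀ q : Polynomial (ZMod (p ^ 2)), Φ q = eval₂ ψ x₀ q := by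
      intro q; rw [hΦdef, coe_eval₂RingHom]
    have hΦp : Φ ((p : ℕ) : Polynomial (ZMod (p ^ 2))) = (p : R) := map_natCast Φ p
    have hstep : ∀ r : R, ∃ q : Polynomial (ZMod (p ^ 2)), r - Φ q ∈ m := by
      intro r
      obtain ⟨q', hq'⟩ := haval (ρ r)
      refine ⟨polyLift p (p ^ 2) q', ?_⟩
      rw [← hmem_ker, map_sub, hΦap, hnat, hρx₀, map_polyLift, hq', sub_self]
    set G₂ := polyLift p (p ^ 2) g with hG2
    haveI : Fact (1 < p) := ⟨hp.one_lt⟩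
    haveI : Fact (1 < p ^ 2) := ⟨Nat.one_lt_pow two_ne_zero hp.one_lt⟩
    have hG2m : G₂.Monic := polyLift_monic p (p ^ 2) hg
    have hG2deg : G₂.degree = g.degree := polyLift_degree p (p ^ 2) hg
    have he0m : Φ G₂ ∈ m := by
      rw [← hmem_ker, hΦap, hnat, hρx₀, hG2, map_polyLift]
      exact minpoly.aeval _ _
    rw [hmp] at he0m
    obtain ⟨c, hc⟩ := Ideal.mem_span_singleton'.mp he0m
    obtain ⟨v, hv⟩ := hstep c
    have hcpv : Φ G₂ = Φ v * (p : R) := by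
      rw [hmp] at hv
      obtain ⟨c₁, hc₁⟩ := Ideal.mem_span_singleton'.mp hv
      calc Φ G₂ = c * (p : R) := hc.symm
        _ = (Φ v + c₁ * (p : R)) * (p : R) := by linear_combination (-(p : R)) * hc₁
        _ = Φ v * (p : R) + c₁ * ((p : R) * (p : R)) := by ring
        _ = Φ v * (p : R) := by rw [hpp0, mul_zero, add_zero]
    set w := -(v %ₘ G₂) with hwdef
    have hwdeg : w.degree < g.degree := by
      rw [hwdef, degree_neg, ← hG2deg]
      exact degree_modByMonic_lt v hG2m
    set F := G₂ + ((p : ℕ) : Polynomial (ZMod (p ^ 2))) * w with hFdef2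
    have hFm : F.Monic := F_monic p g hg w hwdeg
    have hFdeg : F.degree = g.degree := F_degree p g hg w hwdeg
    have h9 : (p : R) * Φ G₂ = 0 := by
      rw [hcpv]
      calc (p : R) * (Φ v * (p : R)) = Φ v * ((p : R) * (p : R)) := by ring
        _ = 0 := by rw [hpp0, mul_zero]
    have hvsplit : v %ₘ G₂ + G₂ * (v /ₘ G₂) = v := modByMonic_add_div v G₂
    have h10 : Φ (v %ₘ G₂) + Φ G₂ * Φ (v /ₘ G₂) = Φ v := by
      have := congrArg Φ hvsplit
      rwa [map_add, map_mul] at this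
    have h8 : (p : R) * Φ (v %ₘ G₂) = Φ G₂ := by
      linear_combination (p : R) * h10 - Φ (v /ₘ G₂) * h9 - hcpv
    have hFx : Φ F = 0 := by
      rw [hFdef2, map_add, map_mul, hΦp, hwdef, map_neg]
      linear_combination -h8
    have hsurj : Function.Surjective Φ := by
      intro r
      obtain ⟨q₁, hq₁⟩ := hstep r
      rw [hmp] at hq₁
      obtain ⟨c', hc'⟩ := Ideal.mem_span_singleton'.mp hq₁
      obtain ⟨q₂, hq₂⟩ := hstep c'
      rw [hmp] at hq₂
      obtain ⟨c₂, hc₂⟩ := Ideal.mem_span_singleton'.mp hq₂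
      refine ⟨q₁ + q₂ * ((p : ℕ) : Polynomial (ZMod (p ^ 2))), ?_⟩
      rw [map_add, map_mul, hΦp]
      calc Φ q₁ + Φ q₂ * (p : R) = Φ q₁ + (c' - c₂ * (p : R)) * (p : R) := by linear_combination ((p : R)) * hc₂
        _ = Φ q₁ + c' * (p : R) - c₂ * ((p : R) * (p : R)) := by ring
        _ = Φ q₁ + (r - Φ q₁) - c₂ * 0 := by rw [hc', hpp0]
        _ = r := by ring
    have hpp0' : ((p : ℕ) : Polynomial (ZMod (p ^ 2))) * ((p : ℕ) : Polynomial (ZMod (p ^ 2))) = 0 := by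
      rw [← Nat.cast_mul, ← sq, ← Polynomial.C_eq_natCast, ZMod.natCast_self, map_zero]
    have hker : RingHom.ker Φ = Ideal.span {F} := by
      apply le_antisymm
      · intro f hf
        rw [RingHom.mem_ker] at hf
        have hfd : f %ₘ F + F * (f /ₘ F) = f := modByMonic_add_div f F
        have hΦr : Φ (f %ₘ F) = 0 := by
          have h20 := congrArg Φ hfd
          rw [map_add, map_mul, hFx, zero_mul, add_zero] at h20
          rw [h20, hf]
        have hrde : (f %ₘ F).degree < g.degree := hFdeg ▸ degree_modByMonic_lt f hFm
        have hrbar : (f %ₘ F).map (ZMod.castHom (hdvd p) (ZMod p)) = 0 := by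
          have h11 : aeval α ((f %ₘ F).map (ZMod.castHom (hdvd p) (ZMod p))) = 0 := by
            have h12 := hnat x₀ (f %ₘ F)
            rw [hρx₀] at h12
            rw [← h12, ← hΦap, hΦr, map_zero]
          exact eq_zero_of_dvd_of_degree_lt (minpoly.dvd (ZMod p) α h11)
            (lt_of_le_of_lt (degree_map_le) hrde)
        have hrmem : f %ₘ F ∈ Ideal.span {((p : ℕ) : Polynomial (ZMod (p ^ 2)))} := by
          rw [← ker_polyred p, RingHom.mem_ker, coe_mapRingHom]
          exact hrbar
        obtain ⟨u, hu⟩ := Ideal.mem_span_singleton'.mp hrmem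
        have hus : u %ₘ F + F * (u /ₘ F) = u := modByMonic_add_div u F
        have hΦu' : Φ (u %ₘ F) * (p : R) = 0 := by
          have h12 : Φ u * (p : R) = 0 := by
            have h13 := congrArg Φ hu
            rw [map_mul, hΦp, hΦr] at h13
            exact h13
          have h14 := congrArg Φ hus
          rw [map_add, map_mul, hFx, zero_mul, add_zero] at h14
          rw [h14, h12]
        have humem : Φ (u %ₘ F) ∈ m := hannm (p : R) hpne _ hΦu'
        have hubar : (u %ₘ F).map (ZMod.castHom (hdvd p) (ZMod p)) = 0 := by
          have h15 : aeval α ((u %ₘ F).map (ZMod.castHom (hdvd p) (ZMod p))) = 0 := by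
            have h16 := hnat x₀ (u %ₘ F)
            rw [hρx₀] at h16
            rw [← h16, ← hΦap]
            exact (hmem_ker _).mpr humem
          exact eq_zero_of_dvd_of_degree_lt (minpoly.dvd (ZMod p) α h15)
            (lt_of_le_of_lt (degree_map_le)
              (hFdeg ▸ degree_modByMonic_lt u hFm))
        have humem2 : u %ₘ F ∈ Ideal.span {((p : ℕ) : Polynomial (ZMod (p ^ 2)))} := by
          rw [← ker_polyred p, RingHom.mem_ker, coe_mapRingHom]
          exact hubar
        obtain ⟨z, hz⟩ := Ideal.mem_span_singleton'.mp humem2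
        have h17 : F * (u /ₘ F) = u - u %ₘ F := by linear_combination hus
        refine Ideal.mem_span_singleton'.mpr
          ⟨f /ₘ F + (u /ₘ F) * ((p : ℕ) : Polynomial (ZMod (p ^ 2))), ?_⟩
        calc (f /ₘ F + (u /ₘ F) * ((p : ℕ) : Polynomial (ZMod (p ^ 2)))) * F
            = F * (f /ₘ F) + (F * (u /ₘ F)) * ((p : ℕ) : Polynomial (ZMod (p ^ 2))) := by ring
          _ = F * (f /ₘ F) + (u - u %ₘ F) * ((p : ℕ) : Polynomial (ZMod (p ^ 2))) := by rw [h17]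
          _ = F * (f /ₘ F) + u * ((p : ℕ) : Polynomial (ZMod (p ^ 2)))
              - z * (((p : ℕ) : Polynomial (ZMod (p ^ 2))) * ((p : ℕ) : Polynomial (ZMod (p ^ 2)))) := by
              rw [← hz]; ring
          _ = F * (f /ₘ F) + f %ₘ F - z * 0 := by rw [hu, hpp0']
          _ = f := by rw [mul_zero, sub_zero]; linear_combination hfd
      · rw [Ideal.span_le, Set.singleton_subset_iff, SetLike.mem_coe, RingHom.mem_ker]
        exact hFx
    exact ⟨g, w, hg, hgi, hwdeg, ⟨(RingHom.quotientKerEquivOfSurjective hsurj).symm.trans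
      (Ideal.quotEquivOfEq hker)⟩⟩


/-- Theorem 4.1: `R` is a finite commutative local ring with exactly one nontrivial ideal
and residue field of characteristic `p` iff `R ≅ ℤ_p[X,Y]/(g(X), Y²)` for some monic
irreducible `g(X) ∈ ℤ_p[X]`, or `R ≅ ℤ_{p²}[X]/(g₂(X) + p·w(X))` for some monic
irreducible `g(X) ∈ ℤ_p[X]` and some `w(X) ∈ ℤ_{p²}[X]` with `deg w < deg g`, where
`g₂` is the coefficientwise lift of `g` to `ℤ_{p²}[X]`.  (`ℤ_p[X,Y]` is modelled as
`Polynomial (Polynomial (ZMod p))`, the outer variable being `Y`.) -/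
theorem finite_local_ring_with_one_nontrivial_ideal_iff
    (p : ℕ) (hp : p.Prime) (R : Type*) [CommRing R] :
    IsFiniteLocalWithNontrivialIdeals R 1 p ↔
    ((∃ g : Polynomial (ZMod p), g.Monic ∧ Irreducible g ∧
        Nonempty (R ≃+* (Polynomial (Polynomial (ZMod p)) ⧸
          Ideal.span {Polynomial.C g, (Polynomial.X : Polynomial (Polynomial (ZMod p))) ^ 2}))) ∨
     (∃ (g : Polynomial (ZMod p)) (w : Polynomial (ZMod (p ^ 2))),
        g.Monic ∧ Irreducible g ∧ w.degree < g.degree ∧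
        Nonempty (R ≃+* (Polynomial (ZMod (p ^ 2)) ⧸
          Ideal.span {polyLift p (p ^ 2) g + (p : Polynomial (ZMod (p ^ 2))) * w})))) := by
  haveI := Fact.mk hp
  constructor
  · exact forward_dir p hp R
  · rintro (⟨g, hg, hgi, ⟨e⟩⟩ | ⟨g, w, hg, hgi, hw, ⟨e⟩⟩)
    · exact IFL_transfer e (model1_prop p g hg hgi)
    · exact IFL_transfer e (model2_prop p g hg hgi w hw)
end

section
/- Let p be a prime and, for i = 1, 2, let g_i(X), u_i(X) ∈ ℤ_{p²}[X] with all coefficients in {0, 1, …, p−1}, g_i(X) monic with irreducible reduction modulo p, u_i(X) ≢ 0 (mod p) with deg u_i(X) < deg g_i(X). Set R_i = ℤ_{p²}[X, Y]/(g_i(X), Y² − p·u_i(X), pY) and K_i = ℤ_{p²}[X]/(p, g_i(X)). If R₁ is isomorphic to R₂ as a ring, then there exist a field isomorphism τ : K₁ → K₂ and a polynomial v₂(X) ∈ ℤ_{p²}[X] not in the ideal (p, g₂(X)) such that the equality \overline{u₂(X)} = \overline{v₂(X)}² · τ(\overline{u₁(X)}) holds in K₂, where overlines denote images in K₂ (respectively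 K₁) under the natural quotient maps. -/
set_option synthInstance.maxHeartbeats 400000
set_option maxHeartbeats 1000000

open Polynomial

/-- The ring `R = ℤ_{p²}[X,Y]/(g(X), Y² − p·u(X), pY)`, with `ℤ_{p²}[X,Y]` modelled as
`Polynomial (Polynomial (ZMod (p^2)))`, the outer indeterminate being `Y` and the inner
one being `X`. -/
abbrev paperRingR (p : ℕ) (g u : Polynomial (ZMod (p ^ 2))) : Type :=
  Polynomial (Polynomial (ZMod (p ^ 2))) ⧸
    Ideal.span
      ({Polynomial.C g,
        Polynomial.X ^ 2 -
          (p : Polynomial (Polynomial (ZMod (p ^ 2)))) * Polynomial.C u,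
        (p : Polynomial (Polynomial (ZMod (p ^ 2)))) * Polynomial.X} :
        Set (Polynomial (Polynomial (ZMod (p ^ 2)))))

/-- The residue ring `K = ℤ_{p²}[X]/(p, g(X))`. -/
abbrev paperFieldK (p : ℕ) (g : Polynomial (ZMod (p ^ 2))) : Type :=
  Polynomial (ZMod (p ^ 2)) ⧸
    Ideal.span ({(p : Polynomial (ZMod (p ^ 2))), g} : Set (Polynomial (ZMod (p ^ 2))))

namespace P44
variable (p : ℕ)

local notation "c" => ZMod.castHom (dvd_pow_self p (by norm_num : (2:ℕ) ≠ 0)) (ZMod p)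

lemma cast_zero_iff (hp : p.Prime) (a : ZMod (p^2)) :
    c a = 0 ↔ ∃ b, a = (p : ZMod (p^2)) * b := by
  haveI : NeZero (p^2) := ⟨pow_ne_zero _ hp.ne_zero⟩
  constructor
  · intro h
    have h1 : ((a.val : ℕ) : ZMod p) = 0 := by
      rwa [ZMod.castHom_apply, ZMod.cast_eq_val] at h
    rw [ZMod.natCast_eq_zero_iff] at h1
    obtain ⟨k, hk⟩ := h1
    exact ⟨(k : ZMod (p^2)), by rw [← Nat.cast_mul, ← hk, ZMod.natCast_val, ZMod.cast_id]⟩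
  · rintro ⟨b, rfl⟩
    rw [map_mul, map_natCast, ZMod.natCast_self, zero_mul]

lemma ker_cast (hp : p.Prime) :
    RingHom.ker (c : ZMod (p^2) →+* ZMod p) = Ideal.span {(p : ZMod (p^2))} := by
  ext a
  rw [RingHom.mem_ker, cast_zero_iff p hp, Ideal.mem_span_singleton]
  simp [dvd_iff_exists_eq_mul_left, eq_comm, mul_comm]

lemma p_mul_zero_iff (hp : p.Prime) (a : ZMod (p^2)) :
    (p : ZMod (p^2)) * a = 0 ↔ c a = 0 := by
  haveI : NeZero (p^2) := ⟨pow_ne_zero _ hp.ne_zero⟩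
  rw [cast_zero_iff p hp]
  constructor
  · intro h
    have : ((p * a.val : ℕ) : ZMod (p^2)) = 0 := by
      push_cast
      rw [ZMod.natCast_val, ZMod.cast_id]; exact h
    rw [ZMod.natCast_eq_zero_iff] at this
    obtain ⟨k, hk⟩ := this
    have hpk : a.val = p * k := by
      have h2 : p * a.val = p * (p * k) := by rw [hk]; ring
      exact Nat.eq_of_mul_eq_mul_left hp.pos h2
    exact ⟨(k : ZMod (p^2)), by rw [← Nat.cast_mul, ← hpk, ZMod.natCast_val, ZMod.cast_id]⟩
  · rintro ⟨b, rfl⟩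
    rw [← mul_assoc, ← Nat.cast_mul, ← pow_two, ZMod.natCast_self, zero_mul]

local notation "cp" => Polynomial.mapRingHom (c : ZMod (p^2) →+* ZMod p)

lemma c_surjective (hp : p.Prime) : Function.Surjective (c : ZMod (p^2) →+* ZMod p) := by
  intro x
  obtain ⟨n, rfl⟩ := ZMod.intCast_surjective x
  exact ⟨n, map_intCast _ n⟩

lemma cp_surjective (hp : p.Prime) : Function.Surjective (cp : Polynomial (ZMod (p^2)) →+* Polynomial (ZMod p)) := by
  exact Polynomial.map_surjective _ (c_surjective p hp)

lemma ker_cp (hp : p.Prime) :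
    RingHom.ker (cp : Polynomial (ZMod (p^2)) →+* Polynomial (ZMod p)) =
      Ideal.span {(p : Polynomial (ZMod (p^2)))} := by
  rw [Polynomial.ker_mapRingHom, ker_cast p hp, Ideal.map_span, Set.image_singleton,
    Polynomial.C_eq_natCast]

lemma map_zero_iff (hp : p.Prime) (z : Polynomial (ZMod (p^2))) :
    z.map (c : ZMod (p^2) →+* ZMod p) = 0 ↔ ∃ w, z = (p : Polynomial (ZMod (p^2))) * w := by
  have : z.map (c : ZMod (p^2) →+* ZMod p) = cp z := rfl
  rw [this, ← RingHom.mem_ker, ker_cp p hp, Ideal.mem_span_singleton]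
  constructor
  · rintro ⟨w, rfl⟩; exact ⟨w, rfl⟩
  · rintro ⟨w, rfl⟩; exact ⟨w, rfl⟩

lemma poly_p_mul_zero_iff (hp : p.Prime) (z : Polynomial (ZMod (p^2))) :
    (p : Polynomial (ZMod (p^2))) * z = 0 ↔ z.map (c : ZMod (p^2) →+* ZMod p) = 0 := by
  rw [← Polynomial.C_eq_natCast]
  constructor
  · intro h
    ext k
    rw [Polynomial.coeff_map, Polynomial.coeff_zero, ← p_mul_zero_iff p hp]
    have := congrArg (fun q => Polynomial.coeff q k) h
    simpa [Polynomial.coeff_C_mul] using this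
  · intro h
    ext k
    have hk := congrArg (fun q => Polynomial.coeff q k) h
    simp only [Polynomial.coeff_map, Polynomial.coeff_zero] at hk
    rw [← p_mul_zero_iff p hp] at hk
    simpa [Polynomial.coeff_C_mul] using hk

lemma span_pg_eq_comap (hp : p.Prime) (g : Polynomial (ZMod (p^2))) :
    Ideal.span {(p : Polynomial (ZMod (p^2))), g} =
      Ideal.comap (cp : Polynomial (ZMod (p^2)) →+* Polynomial (ZMod p))
        (Ideal.span {g.map (c : ZMod (p^2) →+* ZMod p)}) := by
  apply le_antisymm
  · rw [Ideal.span_le, Set.insert_subset_iff, Set.singleton_subset_iff]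
    haveI : Fact p.Prime := ⟨hp⟩
    constructor
    · rw [SetLike.mem_coe, Ideal.mem_comap, map_natCast]
      simp
    · rw [SetLike.mem_coe, Ideal.mem_comap]
      exact Ideal.subset_span rfl
  · intro f hf
    rw [Ideal.mem_comap, Ideal.mem_span_singleton] at hf
    obtain ⟨h', hh'⟩ := hf
    obtain ⟨h, rfl⟩ := cp_surjective p hp h'
    have hker : f - g * h ∈ RingHom.ker (cp : Polynomial (ZMod (p^2)) →+* Polynomial (ZMod p)) := by
      simp only [RingHom.mem_ker, map_sub, map_mul, hh', Polynomial.coe_mapRingHom]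
      ring
    rw [ker_cp p hp, Ideal.mem_span_singleton] at hker
    obtain ⟨w, hw⟩ := hker
    rw [Ideal.mem_span_pair]
    exact ⟨w, h, by linear_combination -hw⟩

lemma spanJ_maximal (hp : p.Prime) (g : Polynomial (ZMod (p^2)))
    (hgirr : Irreducible (g.map (c : ZMod (p^2) →+* ZMod p))) :
    (Ideal.span {(p : Polynomial (ZMod (p^2))), g}).IsMaximal := by
  haveI : Fact p.Prime := ⟨hp⟩
  rw [span_pg_eq_comap p hp g]
  exact Ideal.comap_isMaximal_of_surjective _ (cp_surjective p hp)
    (H := PrincipalIdealRing.isMaximal_of_irreducible hgirr)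

lemma u_not_mem (hp : p.Prime) (g u : Polynomial (ZMod (p^2))) (hg : g.Monic)
    (hu : u.map (c : ZMod (p^2) →+* ZMod p) ≠ 0) (hudeg : u.degree < g.degree) :
    u ∉ Ideal.span {(p : Polynomial (ZMod (p^2))), g} := by
  haveI : Fact p.Prime := ⟨hp⟩
  intro hmem
  rw [Ideal.mem_span_pair] at hmem
  obtain ⟨a, b, hab⟩ := hmem
  have hmap : (b.map (c : ZMod (p^2) →+* ZMod p)) * (g.map (c : ZMod (p^2) →+* ZMod p)) =
      u.map (c : ZMod (p^2) →+* ZMod p) := by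
    have := congrArg (cp : Polynomial (ZMod (p^2)) →+* Polynomial (ZMod p)) hab
    simp only [map_add, map_mul, map_natCast] at this
    rw [show ((p : Polynomial (ZMod p))) = 0 by simp] at this
    simpa using this
  have hb : b.map (c : ZMod (p^2) →+* ZMod p) ≠ 0 := by
    intro h0; rw [h0, zero_mul] at hmap; exact hu hmap.symm
  have hdeg_g : (g.map (c : ZMod (p^2) →+* ZMod p)).degree = g.degree := by
    apply Polynomial.degree_map_eq_of_leadingCoeff_ne_zero
    rw [hg.leadingCoeff, map_one]
    exact one_ne_zero
  have h1 : g.degree ≤ (u.map (c : ZMod (p^2) →+* ZMod p)).degree := by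
    rw [← hmap, ← hdeg_g, mul_comm]
    exact Polynomial.degree_le_mul_left _ hb
  have h2 : (u.map (c : ZMod (p^2) →+* ZMod p)).degree ≤ u.degree :=
    Polynomial.degree_map_le
  exact absurd (lt_of_lt_of_le hudeg (le_trans h1 h2)) (lt_irrefl _)

noncomputable abbrev IR (g u : Polynomial (ZMod (p^2))) : Ideal (Polynomial (Polynomial (ZMod (p^2)))) :=
  Ideal.span
      ({Polynomial.C g,
        Polynomial.X ^ 2 -
          (p : Polynomial (Polynomial (ZMod (p ^ 2)))) * Polynomial.C u,
        (p : Polynomial (Polynomial (ZMod (p ^ 2)))) * Polynomial.X} :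
        Set (Polynomial (Polynomial (ZMod (p ^ 2)))))

noncomputable abbrev JK (g : Polynomial (ZMod (p^2))) : Ideal (Polynomial (ZMod (p^2))) :=
  Ideal.span ({(p : Polynomial (ZMod (p ^ 2))), g} : Set (Polynomial (ZMod (p ^ 2))))

abbrev RR (g u : Polynomial (ZMod (p^2))) := Polynomial (Polynomial (ZMod (p^2))) ⧸ IR p g u
abbrev KK (g : Polynomial (ZMod (p^2))) := Polynomial (ZMod (p^2)) ⧸ JK p g

lemma IR_le_ker (g u : Polynomial (ZMod (p^2))) :
    IR p g u ≤ RingHom.ker ((Ideal.Quotient.mk (JK p g)).comp (Polynomial.evalRingHom 0)) := by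
  rw [Ideal.span_le, Set.insert_subset_iff, Set.insert_subset_iff, Set.singleton_subset_iff]
  have hp0 : (Ideal.Quotient.mk (JK p g)) (p : Polynomial (ZMod (p^2))) = 0 :=
    Ideal.Quotient.eq_zero_iff_mem.mpr (Ideal.subset_span (Set.mem_insert _ _))
  have hg0 : (Ideal.Quotient.mk (JK p g)) g = 0 :=
    Ideal.Quotient.eq_zero_iff_mem.mpr (Ideal.subset_span (Set.mem_insert_of_mem _ rfl))
  refine ⟨?_, ?_, ?_⟩ <;>
    simp [RingHom.mem_ker, hp0, hg0]

noncomputable def piR (g u : Polynomial (ZMod (p^2))) : RR p g u →+* KK p g :=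
  Ideal.Quotient.lift (IR p g u)
    ((Ideal.Quotient.mk (JK p g)).comp (Polynomial.evalRingHom 0))
    (fun _ ha => IR_le_ker p g u ha)

lemma piR_mk (g u : Polynomial (ZMod (p^2))) (f : Polynomial (Polynomial (ZMod (p^2)))) :
    piR p g u (Ideal.Quotient.mk (IR p g u) f) = Ideal.Quotient.mk (JK p g) (f.eval 0) :=
  Ideal.Quotient.lift_mk _ _ _

lemma piR_surjective (g u : Polynomial (ZMod (p^2))) : Function.Surjective (piR p g u) := by
  intro x
  obtain ⟨a, rfl⟩ := Ideal.Quotient.mk_surjective x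
  exact ⟨Ideal.Quotient.mk _ (Polynomial.C a), by rw [piR_mk]; simp⟩

lemma rel_pY (g u : Polynomial (ZMod (p^2))) :
    (p : RR p g u) * Ideal.Quotient.mk (IR p g u) Polynomial.X = 0 := by
  rw [← map_natCast (Ideal.Quotient.mk (IR p g u)) p, ← map_mul]
  exact Ideal.Quotient.eq_zero_iff_mem.mpr
    (Ideal.subset_span (by simp))

lemma rel_pp (g u : Polynomial (ZMod (p^2))) (hp : p.Prime) :
    (p : RR p g u) * (p : RR p g u) = 0 := by
  have h0 : ((p^2 : ℕ) : Polynomial (Polynomial (ZMod (p^2)))) = 0 := by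
    rw [← Polynomial.C_eq_natCast, ← Polynomial.C_eq_natCast, ZMod.natCast_self, map_zero, map_zero]
  have h1 : ((p^2 : ℕ) : RR p g u) = 0 := by
    rw [← map_natCast (Ideal.Quotient.mk (IR p g u)), h0, map_zero]
  calc (p : RR p g u) * (p : RR p g u) = ((p^2 : ℕ) : RR p g u) := by push_cast; ring
  _ = 0 := h1

lemma rel_Y2 (g u : Polynomial (ZMod (p^2))) :
    (Ideal.Quotient.mk (IR p g u) Polynomial.X)^2 =
      (p : RR p g u) * Ideal.Quotient.mk (IR p g u) (Polynomial.C u) := by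
  have h : Ideal.Quotient.mk (IR p g u)
      (Polynomial.X ^ 2 - (p : Polynomial (Polynomial (ZMod (p ^ 2)))) * Polynomial.C u) = 0 :=
    Ideal.Quotient.eq_zero_iff_mem.mpr (Ideal.subset_span (by simp))
  rw [map_sub, sub_eq_zero, map_mul, map_pow, map_natCast] at h
  exact h

lemma rel_Cg (g u : Polynomial (ZMod (p^2))) :
    Ideal.Quotient.mk (IR p g u) (Polynomial.C g) = 0 :=
  Ideal.Quotient.eq_zero_iff_mem.mpr (Ideal.subset_span (by simp))

lemma ker_piR_decomp (g u : Polynomial (ZMod (p^2))) (x : RR p g u)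
    (hx : piR p g u x = 0) :
    ∃ A D : RR p g u, x = (p : RR p g u) * A + Ideal.Quotient.mk (IR p g u) Polynomial.X * D := by
  obtain ⟨f, rfl⟩ := Ideal.Quotient.mk_surjective x
  rw [piR_mk, Ideal.Quotient.eq_zero_iff_mem, Ideal.mem_span_pair] at hx
  obtain ⟨a, b, hab⟩ := hx
  have hXdvd : Polynomial.X ∣ f - Polynomial.C (f.eval 0) := by
    rw [Polynomial.X_dvd_iff]
    simp [Polynomial.coeff_zero_eq_eval_zero]
  obtain ⟨d, hd⟩ := hXdvd
  refine ⟨Ideal.Quotient.mk _ (Polynomial.C a), Ideal.Quotient.mk _ d, ?_⟩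
  have hf : f = (p : Polynomial (Polynomial (ZMod (p^2)))) * Polynomial.C a +
      Polynomial.C g * Polynomial.C b + Polynomial.X * d := by
    have : Polynomial.C (f.eval 0) =
        (p : Polynomial (Polynomial (ZMod (p^2)))) * Polynomial.C a + Polynomial.C g * Polynomial.C b := by
      rw [← hab, map_add, map_mul, map_mul]
      simp only [← Polynomial.C_eq_natCast]
      ring
    rw [← this]
    linear_combination hd
  rw [hf]
  rw [map_add, map_add, map_mul, map_mul, map_mul, rel_Cg, map_natCast]
  ring

lemma ker_piR_cube (g u : Polynomial (ZMod (p^2))) (hp : p.Prime) (x : RR p g u)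
    (hx : piR p g u x = 0) : x^3 = 0 := by
  obtain ⟨A, D, rfl⟩ := ker_piR_decomp p g u x hx
  set y := Ideal.Quotient.mk (IR p g u) Polynomial.X with hy
  set U := Ideal.Quotient.mk (IR p g u) (Polynomial.C u) with hU
  have h1 := rel_pY p g u
  have h2 := rel_pp p g u hp
  have h3 := rel_Y2 p g u
  rw [← hy] at h1
  rw [← hy, ← hU] at h3
  linear_combination (3*(p : RR p g u)*A*D^2 + y*D^3) * h3 +
    ((p : RR p g u)*A^3 + 3*A^2*y*D + 3*A*U*D^2) * h2 + (U*D^3) * h1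


lemma p_ne_zeroR (hp : p.Prime) (g u : Polynomial (ZMod (p^2)))
    (hgirr : Irreducible (g.map (c : ZMod (p^2) →+* ZMod p))) :
    (p : RR p g u) ≠ 0 := by
  haveI : Fact p.Prime := ⟨hp⟩
  intro h
  rw [show (p : RR p g u) = Ideal.Quotient.mk _ ((p : Polynomial (Polynomial (ZMod (p^2)))))
       from (map_natCast (Ideal.Quotient.mk (IR p g u)) p).symm, Ideal.Quotient.eq_zero_iff_mem, Ideal.mem_span_insert] at h
  obtain ⟨A, z, hz, hEq⟩ := h
  rw [Ideal.mem_span_insert] at hz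
  obtain ⟨B, z', hz', rfl⟩ := hz
  rw [Ideal.mem_span_singleton] at hz'
  obtain ⟨E, rfl⟩ := hz'
  have e1 : (p : Polynomial (Polynomial (ZMod (p^2)))) = Polynomial.C (p : Polynomial (ZMod (p^2))) :=
    (map_natCast _ p).symm
  have e2 : (p : Polynomial (Polynomial (ZMod (p^2)))) * Polynomial.C u
      = Polynomial.C ((p : Polynomial (ZMod (p^2))) * u) := by rw [e1, ← map_mul]
  rw [e2, e1] at hEq
  -- coeff 0 equation over ZMod p^2
  have h0 := congrArg (fun q => Polynomial.coeff q 0) hEq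
  simp only [Polynomial.coeff_add, Polynomial.mul_coeff_zero, Polynomial.coeff_C_zero,
    Polynomial.coeff_sub, Polynomial.coeff_X_pow, Polynomial.coeff_X_zero, if_neg,
    Polynomial.coeff_one_zero, mul_zero, zero_mul, add_zero, zero_sub, mul_neg] at h0
  have hm := congrArg (Polynomial.mapRingHom (Polynomial.mapRingHom (c : ZMod (p^2) →+* ZMod p))) hEq
  simp only [map_add, map_mul, map_sub, map_pow, Polynomial.coe_mapRingHom, Polynomial.map_C,
    Polynomial.map_X, Polynomial.map_mul, Polynomial.map_natCast] at hm
  have hp0 : ((p : ℕ) : (ZMod p)[X]) = 0 := by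
    rw [← Polynomial.C_eq_natCast, ZMod.natCast_self, map_zero]
  rw [hp0] at hm
  simp only [map_zero, zero_mul, mul_zero, sub_zero, add_zero, zero_add] at hm
  -- hm : 0 = Ā * C ḡ + B̄ * X^2
  have hm0 := congrArg (fun q => Polynomial.coeff q 0) hm
  simp only [Polynomial.coeff_add, Polynomial.mul_coeff_zero, Polynomial.coeff_C_zero,
    Polynomial.coeff_zero, Polynomial.coeff_X_pow, Polynomial.coeff_map,
    Polynomial.coe_mapRingHom] at hm0
  norm_num at hm0 h0
  -- hm0 : map c (A.coeff 0) * map c g = 0 (hopefully), h0 cleaned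
  have hA0 : (A.coeff 0).map (c : ZMod (p^2) →+* ZMod p) = 0 := by
    rcases hm0 with h' | h'
    · exact h'
    · exact absurd h' hgirr.ne_zero
  -- coeff 2 of hm
  have hm2 := congrArg (fun q => Polynomial.coeff q 2) hm
  simp only [Polynomial.coeff_add, Polynomial.coeff_zero, Polynomial.coeff_map,
    Polynomial.coeff_mul_C, Polynomial.coeff_mul_X_pow', Polynomial.coe_mapRingHom] at hm2
  norm_num at hm2
  -- hm2 : 0 = Ā₂ ḡ + B̄.coeff 0
  obtain ⟨A1, hA1⟩ := (map_zero_iff p hp (A.coeff 0)).mp hA0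
  have hz : (p : Polynomial (ZMod (p^2))) * (1 - A1 * g + B.coeff 0 * u) = 0 := by
    linear_combination h0 + g * hA1
  rw [poly_p_mul_zero_iff p hp] at hz
  simp only [Polynomial.map_add, Polynomial.map_sub, Polynomial.map_one, Polynomial.map_mul] at hz
  exact hgirr.not_isUnit (IsUnit.of_mul_eq_one
    ((A1.map (c : ZMod (p^2) →+* ZMod p)) + (A.coeff 2).map (c : ZMod (p^2) →+* ZMod p) * u.map (c : ZMod (p^2) →+* ZMod p))
    (by linear_combination -hz - (u.map (c : ZMod (p^2) →+* ZMod p)) * hm2))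


lemma piR_cancel_p (hp : p.Prime) (g u : Polynomial (ZMod (p^2)))
    (hgirr : Irreducible (g.map (c : ZMod (p^2) →+* ZMod p)))
    (x y : RR p g u) (h : (p : RR p g u) * x = (p : RR p g u) * y) :
    piR p g u x = piR p g u y := by
  haveI : Fact p.Prime := ⟨hp⟩
  haveI hmax := spanJ_maximal p hp g hgirr
  letI : Field (KK p g) := Ideal.Quotient.field _
  by_contra hne
  have hd : piR p g u (x - y) ≠ 0 := by
    rw [map_sub, sub_ne_zero]; exact hne
  obtain ⟨e, he⟩ := piR_surjective p g u (piR p g u (x - y))⁻¹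
  set n := 1 - (x - y) * e with hn
  have hpn : piR p g u n = 0 := by
    rw [hn, map_sub, map_one, map_mul, he, mul_inv_cancel₀ hd, sub_self]
  have hn3 : n ^ 3 = 0 := ker_piR_cube p g u hp n hpn
  have hunit : (x - y) * (e * (1 + n + n ^ 2)) = 1 := by
    have hxe : (x - y) * e = 1 - n := by rw [hn]; ring
    calc (x - y) * (e * (1 + n + n ^ 2)) = (x - y) * e * (1 + n + n ^ 2) := by ring
    _ = (1 - n) * (1 + n + n ^ 2) := by rw [hxe]
    _ = 1 - n ^ 3 := by ring
    _ = 1 := by rw [hn3, sub_zero]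
  have hp0 : (p : RR p g u) = 0 := by
    have h2 : (p : RR p g u) * (x - y) = 0 := by linear_combination h
    calc (p : RR p g u) = (p : RR p g u) * ((x - y) * (e * (1 + n + n ^ 2))) := by
          rw [hunit]; ring
    _ = ((p : RR p g u) * (x - y)) * (e * (1 + n + n ^ 2)) := by ring
    _ = 0 := by rw [h2]; ring
  exact p_ne_zeroR p hp g u hgirr hp0

end P44

/-- Proposition 4.4 (1): if `R₁ = ℤ_{p²}[X,Y]/(g₁, Y² − p·u₁, pY)` and
`R₂ = ℤ_{p²}[X,Y]/(g₂, Y² − p·u₂, pY)` are isomorphic rings, then there are a field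
isomorphism `τ : K₁ → K₂` of the residue fields `Kᵢ = ℤ_{p²}[X]/(p, gᵢ)` and a
polynomial `v₂(X) ∉ (p, g₂(X))` with `u₂(X) = v₂(X)² · τ(u₁(X))` in `K₂` (overlines,
i.e. the quotient maps, being implicit). -/
theorem paperRingR_iso_implies
    (p : ℕ) (hp : p.Prime)
    (g₁ g₂ u₁ u₂ : Polynomial (ZMod (p ^ 2)))
    (hg₁coeff : ∀ k, (g₁.coeff k).val < p) (hg₂coeff : ∀ k, (g₂.coeff k).val < p)
    (hu₁coeff : ∀ k, (u₁.coeff k).val < p) (hu₂coeff : ∀ k, (u₂.coeff k).val < p)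
    (hg₁ : g₁.Monic) (hg₂ : g₂.Monic)
    (hg₁irr : Irreducible
      (g₁.map (ZMod.castHom (dvd_pow_self p (by norm_num : (2:ℕ) ≠ 0)) (ZMod p))))
    (hg₂irr : Irreducible
      (g₂.map (ZMod.castHom (dvd_pow_self p (by norm_num : (2:ℕ) ≠ 0)) (ZMod p))))
    (hu₁ : u₁.map (ZMod.castHom (dvd_pow_self p (by norm_num : (2:ℕ) ≠ 0)) (ZMod p)) ≠ 0)
    (hu₂ : u₂.map (ZMod.castHom (dvd_pow_self p (by norm_num : (2:ℕ) ≠ 0)) (ZMod p)) ≠ 0)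
    (hu₁deg : u₁.degree < g₁.degree) (hu₂deg : u₂.degree < g₂.degree)
    (hiso : Nonempty (paperRingR p g₁ u₁ ≃+* paperRingR p g₂ u₂)) :
    ∃ (τ : paperFieldK p g₁ ≃+* paperFieldK p g₂) (v₂ : Polynomial (ZMod (p ^ 2))),
      v₂ ∉ Ideal.span ({(p : Polynomial (ZMod (p ^ 2))), g₂} : Set (Polynomial (ZMod (p ^ 2)))) ∧
      Ideal.Quotient.mk
          (Ideal.span ({(p : Polynomial (ZMod (p ^ 2))), g₂} : Set (Polynomial (ZMod (p ^ 2)))))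
          u₂ =
        (Ideal.Quotient.mk
          (Ideal.span ({(p : Polynomial (ZMod (p ^ 2))), g₂} : Set (Polynomial (ZMod (p ^ 2)))))
          v₂) ^ 2 *
        τ (Ideal.Quotient.mk
          (Ideal.span ({(p : Polynomial (ZMod (p ^ 2))), g₁} : Set (Polynomial (ZMod (p ^ 2)))))
          u₁) := by
  classical
  obtain ⟨φ⟩ := hiso
  haveI : Fact p.Prime := ⟨hp⟩
  haveI hmax1 := P44.spanJ_maximal p hp g₁ hg₁irr
  haveI hmax2 := P44.spanJ_maximal p hp g₂ hg₂irr
  letI : Field (P44.KK p g₁) := Ideal.Quotient.field _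
  letI : Field (P44.KK p g₂) := Ideal.Quotient.field _
  set π₁ := P44.piR p g₁ u₁ with hπ₁
  set π₂ := P44.piR p g₂ u₂ with hπ₂
  have hker : RingHom.ker π₂ = (RingHom.ker π₁).map (φ : P44.RR p g₁ u₁ →+* P44.RR p g₂ u₂) := by
    apply le_antisymm
    · intro x hx
      rw [RingHom.mem_ker] at hx
      have hx3 : x ^ 3 = 0 := P44.ker_piR_cube p g₂ u₂ hp x hx
      have hk1 : π₁ (φ.symm x) = 0 := by
        have h3 : (π₁ (φ.symm x)) ^ 3 = 0 := by
          rw [← map_pow, ← map_pow, hx3, map_zero, map_zero]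
        exact (pow_eq_zero_iff (by norm_num : (3:ℕ) ≠ 0)).mp h3
      have hmem := Ideal.mem_map_of_mem (φ : P44.RR p g₁ u₁ →+* P44.RR p g₂ u₂)
        (show φ.symm x ∈ RingHom.ker π₁ from hk1)
      simpa using hmem
    · rw [Ideal.map_le_iff_le_comap]
      intro x hx
      rw [RingHom.mem_ker] at hx
      have hx3 : x ^ 3 = 0 := P44.ker_piR_cube p g₁ u₁ hp x hx
      rw [Ideal.mem_comap, RingHom.mem_ker]
      have h3 : (π₂ (φ x)) ^ 3 = 0 := by
        rw [← map_pow, ← map_pow, hx3, map_zero, map_zero]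
      exact (pow_eq_zero_iff (by norm_num : (3:ℕ) ≠ 0)).mp h3
  let eqv := Ideal.quotientEquiv (RingHom.ker π₁) (RingHom.ker π₂) φ hker
  let κ₁ := RingHom.quotientKerEquivOfSurjective (P44.piR_surjective p g₁ u₁)
  let κ₂ := RingHom.quotientKerEquivOfSurjective (P44.piR_surjective p g₂ u₂)
  let τ : P44.KK p g₁ ≃+* P44.KK p g₂ := (κ₁.symm.trans eqv).trans κ₂
  have hκ₁ : ∀ x, κ₁ (Ideal.Quotient.mk (RingHom.ker π₁) x) = π₁ x := fun x =>
    RingHom.kerLift_mk π₁ x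
  have hκ₂ : ∀ x, κ₂ (Ideal.Quotient.mk (RingHom.ker π₂) x) = π₂ x := fun x =>
    RingHom.kerLift_mk π₂ x
  have hcompat : ∀ x, τ (π₁ x) = π₂ (φ x) := by
    intro x
    show κ₂ (eqv (κ₁.symm (π₁ x))) = π₂ (φ x)
    have h1 : κ₁.symm (π₁ x) = Ideal.Quotient.mk (RingHom.ker π₁) x := by
      rw [← hκ₁ x]
      exact κ₁.symm_apply_apply _
    rw [h1]
    have h2 : eqv (Ideal.Quotient.mk (RingHom.ker π₁) x) =
        Ideal.Quotient.mk (RingHom.ker π₂) (φ x) := Ideal.quotientEquiv_mk _ _ _ _ _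
    rw [h2, hκ₂]
  -- the element w = φ(Y)
  set w := φ (Ideal.Quotient.mk (P44.IR p g₁ u₁) Polynomial.X) with hw
  have hπ₁Y : π₁ (Ideal.Quotient.mk (P44.IR p g₁ u₁) Polynomial.X) = 0 := by
    rw [hπ₁, P44.piR_mk]
    simp
  have hπ₂w : π₂ w = 0 := by rw [hw, ← hcompat, hπ₁Y, map_zero]
  obtain ⟨A, D, hAD⟩ := P44.ker_piR_decomp p g₂ u₂ w hπ₂w
  have hw2 : w ^ 2 = (p : P44.RR p g₂ u₂) *
      φ (Ideal.Quotient.mk (P44.IR p g₁ u₁) (Polynomial.C u₁)) := by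
    rw [hw, ← map_pow, P44.rel_Y2, map_mul, map_natCast φ p]
  have hww : w ^ 2 = (p : P44.RR p g₂ u₂) *
      (Ideal.Quotient.mk (P44.IR p g₂ u₂) (Polynomial.C u₂) * D ^ 2) := by
    have h1 := P44.rel_pY p g₂ u₂
    have h2 := P44.rel_pp p g₂ u₂ hp
    have h3 := P44.rel_Y2 p g₂ u₂
    rw [hAD]
    linear_combination A ^ 2 * h2 + (2 * A * D) * h1 + D ^ 2 * h3
  have key : (p : P44.RR p g₂ u₂) * φ (Ideal.Quotient.mk (P44.IR p g₁ u₁) (Polynomial.C u₁)) =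
      (p : P44.RR p g₂ u₂) * (Ideal.Quotient.mk (P44.IR p g₂ u₂) (Polynomial.C u₂) * D ^ 2) :=
    hw2.symm.trans hww
  have happ := P44.piR_cancel_p p hp g₂ u₂ hg₂irr _ _ key
  rw [← hπ₂] at happ
  have hLHS : π₂ (φ (Ideal.Quotient.mk (P44.IR p g₁ u₁) (Polynomial.C u₁))) =
      τ (Ideal.Quotient.mk (P44.JK p g₁) u₁) := by
    rw [← hcompat]
    congr 1
    rw [hπ₁, P44.piR_mk]
    simp
  have hRHS : π₂ (Ideal.Quotient.mk (P44.IR p g₂ u₂) (Polynomial.C u₂) * D ^ 2) =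
      Ideal.Quotient.mk (P44.JK p g₂) u₂ * (π₂ D) ^ 2 := by
    rw [map_mul, map_pow, hπ₂, P44.piR_mk]
    simp
  have hτ : τ (Ideal.Quotient.mk (P44.JK p g₁) u₁) =
      Ideal.Quotient.mk (P44.JK p g₂) u₂ * (π₂ D) ^ 2 := by
    rw [← hLHS, happ, hRHS]
  have hu1ne : Ideal.Quotient.mk (P44.JK p g₁) u₁ ≠ 0 := by
    rw [Ne, Ideal.Quotient.eq_zero_iff_mem]
    exact P44.u_not_mem p hp g₁ u₁ hg₁ hu₁ hu₁deg
  have hτne : τ (Ideal.Quotient.mk (P44.JK p g₁) u₁) ≠ 0 := by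
    intro h0
    exact hu1ne (by simpa using τ.injective (h0.trans (map_zero τ).symm))
  have hq : (π₂ D) ≠ 0 := by
    intro h0
    rw [h0] at hτ
    simp at hτ
    exact hu1ne hτ
  obtain ⟨v₂, hv₂⟩ := Ideal.Quotient.mk_surjective ((π₂ D)⁻¹)
  refine ⟨τ, v₂, ?_, ?_⟩
  · intro hmem
    have h0 : Ideal.Quotient.mk (P44.JK p g₂) v₂ = 0 := Ideal.Quotient.eq_zero_iff_mem.mpr hmem
    rw [hv₂] at h0
    exact hq (inv_eq_zero.mp h0)
  · rw [hv₂, hτ]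
    field_simp
end

section
/- Let p be a prime and let g(X), u₁(X), u₂(X) ∈ ℤ_{p²}[X] with all coefficients in {0, 1, …, p−1}, where g(X) is monic with irreducible reduction modulo p, and u₁(X), u₂(X) ≢ 0 (mod p) with deg u_i(X) < deg g(X). Set R_i = ℤ_{p²}[X, Y]/(g(X), Y² − p·u_i(X), pY) for i = 1, 2, and K = ℤ_{p²}[X]/(p, g(X)). If there exist polynomials v₁(X), v₂(X) ∈ ℤ_{p²}[X] such that \overline{u₂(X)} = \overline{v₂(X)}² · \overline{u₁(X)} and \overline{u₁(X)} = \overline{v₁(X)}² · \overline{u₂(X)} hold in K, then R₁ is isomorphic to R₂ as a ring. -/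
set_option synthInstance.maxHeartbeats 400000
open Polynomial

lemma ker_castHom_zmod (p : ℕ) [NeZero p] [NeZero (p^2)] :
    RingHom.ker (ZMod.castHom (dvd_pow_self p (by norm_num : (2:ℕ) ≠ 0)) (ZMod p)) =
      Ideal.span {(p : ZMod (p ^ 2))} := by
  ext a
  simp only [RingHom.mem_ker, Ideal.mem_span_singleton]
  constructor
  · intro h
    have ha : ((a.val : ℕ) : ZMod (p^2)) = a := ZMod.natCast_zmod_val a
    have h2 : ((a.val : ℕ) : ZMod p) = 0 := by
      rw [ZMod.natCast_val]; rw [ZMod.castHom_apply] at h; exact h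
    rw [ZMod.natCast_eq_zero_iff] at h2
    obtain ⟨m, hm⟩ := h2
    exact ⟨(m : ZMod (p^2)), by rw [← ha, hm]; push_cast; ring⟩
  · rintro ⟨b, rfl⟩
    have : (ZMod.castHom (dvd_pow_self p (by norm_num : (2:ℕ) ≠ 0)) (ZMod p))
        ((p : ZMod (p^2)) * b) = 0 := by
      rw [map_mul, map_natCast, ZMod.natCast_self, zero_mul]
    exact this

lemma span_pg_isMaximal (p : ℕ) (hp : p.Prime) (g : Polynomial (ZMod (p ^ 2)))
    (hgirr : Irreducible
      (g.map (ZMod.castHom (dvd_pow_self p (by norm_num : (2:ℕ) ≠ 0)) (ZMod p)))) :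
    (Ideal.span ({(p : Polynomial (ZMod (p ^ 2))), g} :
      Set (Polynomial (ZMod (p ^ 2))))).IsMaximal := by
  haveI : Fact p.Prime := ⟨hp⟩
  set cst := ZMod.castHom (dvd_pow_self p (by norm_num : (2:ℕ) ≠ 0)) (ZMod p) with hcst
  set gbar := g.map cst with hgbar
  set f : Polynomial (ZMod (p ^ 2)) →+* Polynomial (ZMod p) ⧸ Ideal.span {gbar} :=
    (Ideal.Quotient.mk (Ideal.span {gbar})).comp (Polynomial.mapRingHom cst) with hf
  haveI : (Ideal.span {gbar}).IsMaximal :=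
    PrincipalIdealRing.isMaximal_of_irreducible hgirr
  letI : Field (Polynomial (ZMod p) ⧸ Ideal.span {gbar}) := Ideal.Quotient.field _
  have hcsurj : Function.Surjective cst := by
    intro b
    exact ⟨(b.val : ZMod (p^2)), by rw [map_natCast, ZMod.natCast_zmod_val]⟩
  have hsurj : Function.Surjective f :=
    Ideal.Quotient.mk_surjective.comp (Polynomial.map_surjective cst hcsurj)
  have hker : RingHom.ker f = Ideal.span {(p : Polynomial (ZMod (p ^ 2))), g} := by
    apply le_antisymm
    · intro x hx
      rw [RingHom.mem_ker, hf, RingHom.comp_apply, Ideal.Quotient.eq_zero_iff_mem,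
        Ideal.mem_span_singleton] at hx
      obtain ⟨hb, hhb⟩ := hx
      obtain ⟨h, rfl⟩ := Polynomial.map_surjective cst hcsurj hb
      have : x - g * h ∈ RingHom.ker (Polynomial.mapRingHom cst) := by
        rw [RingHom.mem_ker, map_sub, map_mul]
        simp only [Polynomial.coe_mapRingHom] at *
        rw [hhb]; ring
      rw [Polynomial.ker_mapRingHom, ker_castHom_zmod p, Ideal.map_span] at this
      simp only [Set.image_singleton, map_natCast] at this
      have h1 : x - g * h ∈ Ideal.span {(p : Polynomial (ZMod (p ^ 2))), g} := by
        refine Ideal.span_mono ?_ this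
        intro y hy; simp at hy; simp [hy]
      have h2 : g * h ∈ Ideal.span {(p : Polynomial (ZMod (p ^ 2))), g} :=
        Ideal.mul_mem_right _ _ (Ideal.subset_span (by simp))
      simpa using add_mem h1 h2
    · rw [Ideal.span_le]
      rintro y hy
      simp only [Set.mem_insert_iff, Set.mem_singleton_iff] at hy
      rcases hy with rfl | rfl
      · simp only [SetLike.mem_coe, RingHom.mem_ker, hf, RingHom.comp_apply, map_natCast]
        rw [← map_natCast (Ideal.Quotient.mk (Ideal.span {gbar})) p,
          ← Polynomial.C_eq_natCast, ZMod.natCast_self, map_zero, map_zero]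
      · simp only [SetLike.mem_coe, RingHom.mem_ker, hf, RingHom.comp_apply]
        rw [Ideal.Quotient.eq_zero_iff_mem]
        exact Ideal.subset_span rfl
  rw [← hker]
  exact RingHom.ker_isMaximal_of_surjective f hsurj

lemma pC_mem_spanJ (p : ℕ) (g z u : Polynomial (ZMod (p ^ 2)))
    (hz : z ∈ Ideal.span ({(p : Polynomial (ZMod (p ^ 2))), g} : Set _)) :
    (p : Polynomial (Polynomial (ZMod (p ^ 2)))) * Polynomial.C z ∈
      Ideal.span ({Polynomial.C g,
        Polynomial.X ^ 2 - (p : Polynomial (Polynomial (ZMod (p ^ 2)))) * Polynomial.C u,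
        (p : Polynomial (Polynomial (ZMod (p ^ 2)))) * Polynomial.X} :
        Set (Polynomial (Polynomial (ZMod (p ^ 2))))) := by
  obtain ⟨a, b, hab⟩ := Ideal.mem_span_pair.mp hz
  have hp2 : (p : Polynomial (ZMod (p ^ 2))) * (p : Polynomial (ZMod (p ^ 2))) = 0 := by
    have h1 : ((p ^ 2 : ℕ) : ZMod (p ^ 2)) = 0 := ZMod.natCast_self _
    have : ((p ^ 2 : ℕ) : Polynomial (ZMod (p ^ 2))) = 0 := by
      rw [← Polynomial.C_eq_natCast, h1, map_zero]
    calc (p : Polynomial (ZMod (p ^ 2))) * p = ((p ^ 2 : ℕ) : Polynomial (ZMod (p ^ 2))) := by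
          push_cast; ring
      _ = 0 := this
  have key : (p : Polynomial (Polynomial (ZMod (p ^ 2)))) * Polynomial.C z =
      Polynomial.C ((p : Polynomial (ZMod (p ^ 2))) * b) * Polynomial.C g := by
    rw [← Polynomial.C_eq_natCast, ← map_mul, ← map_mul]
    congr 1
    rw [← hab]
    linear_combination a * hp2
  rw [key]
  exact Ideal.mul_mem_left _ _ (Ideal.subset_span (by simp))

lemma CzX_mem_spanJ (p : ℕ) (g z u : Polynomial (ZMod (p ^ 2)))
    (hz : z ∈ Ideal.span ({(p : Polynomial (ZMod (p ^ 2))), g} : Set _)) :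
    Polynomial.C z * Polynomial.X ∈
      Ideal.span ({Polynomial.C g,
        Polynomial.X ^ 2 - (p : Polynomial (Polynomial (ZMod (p ^ 2)))) * Polynomial.C u,
        (p : Polynomial (Polynomial (ZMod (p ^ 2)))) * Polynomial.X} :
        Set (Polynomial (Polynomial (ZMod (p ^ 2))))) := by
  obtain ⟨a, b, hab⟩ := Ideal.mem_span_pair.mp hz
  have key : Polynomial.C z * Polynomial.X =
      Polynomial.C a * ((p : Polynomial (Polynomial (ZMod (p ^ 2)))) * Polynomial.X) +
        (Polynomial.C b * Polynomial.X) * Polynomial.C g := by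
    rw [← hab]
    simp only [map_add, map_mul, map_natCast]
    ring
  rw [key]
  exact add_mem (Ideal.mul_mem_left _ _ (Ideal.subset_span (by simp)))
    (Ideal.mul_mem_left _ _ (Ideal.subset_span (by simp)))

lemma subst_ker (p : ℕ) (g u u' t : Polynomial (ZMod (p ^ 2)))
    (h : t ^ 2 * u' - u ∈ Ideal.span ({(p : Polynomial (ZMod (p ^ 2))), g} : Set _)) :
    Ideal.span ({Polynomial.C g,
        Polynomial.X ^ 2 - (p : Polynomial (Polynomial (ZMod (p ^ 2)))) * Polynomial.C u,
        (p : Polynomial (Polynomial (ZMod (p ^ 2)))) * Polynomial.X} :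
        Set (Polynomial (Polynomial (ZMod (p ^ 2))))) ≤
      RingHom.ker ((Ideal.Quotient.mk
        (Ideal.span ({Polynomial.C g,
          Polynomial.X ^ 2 - (p : Polynomial (Polynomial (ZMod (p ^ 2)))) * Polynomial.C u',
          (p : Polynomial (Polynomial (ZMod (p ^ 2)))) * Polynomial.X} :
          Set (Polynomial (Polynomial (ZMod (p ^ 2))))))).comp
        (Polynomial.eval₂RingHom
          (Polynomial.C : Polynomial (ZMod (p ^ 2)) →+*
            Polynomial (Polynomial (ZMod (p ^ 2))))
          (Polynomial.C t * Polynomial.X))) := by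
  rw [Ideal.span_le]
  rintro y hy
  simp only [Set.mem_insert_iff, Set.mem_singleton_iff] at hy
  rcases hy with rfl | rfl | rfl
  · simp only [SetLike.mem_coe, RingHom.mem_ker, RingHom.comp_apply, coe_eval₂RingHom,
      eval₂_C, Ideal.Quotient.eq_zero_iff_mem]
    exact Ideal.subset_span (by simp)
  · rw [SetLike.mem_coe, RingHom.mem_ker, RingHom.comp_apply]
    have heval : (Polynomial.eval₂RingHom
        (Polynomial.C : Polynomial (ZMod (p ^ 2)) →+*
          Polynomial (Polynomial (ZMod (p ^ 2))))
        (Polynomial.C t * Polynomial.X))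
        (Polynomial.X ^ 2 - (p : Polynomial (Polynomial (ZMod (p ^ 2)))) * Polynomial.C u) =
        (Polynomial.C t * Polynomial.X) ^ 2 -
          (p : Polynomial (Polynomial (ZMod (p ^ 2)))) * Polynomial.C u := by
      simp only [map_sub, map_mul, map_pow, map_natCast, coe_eval₂RingHom, eval₂_X, eval₂_C]
    rw [heval]
    have key : (Polynomial.C t * Polynomial.X) ^ 2 -
        (p : Polynomial (Polynomial (ZMod (p ^ 2)))) * Polynomial.C u =
        Polynomial.C (t ^ 2) *
          (Polynomial.X ^ 2 -
            (p : Polynomial (Polynomial (ZMod (p ^ 2)))) * Polynomial.C u') +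
          (p : Polynomial (Polynomial (ZMod (p ^ 2)))) * Polynomial.C (t ^ 2 * u' - u) := by
      simp only [map_sub, map_mul, map_pow]
      ring
    rw [Ideal.Quotient.eq_zero_iff_mem, key]
    exact add_mem (Ideal.mul_mem_left _ _ (Ideal.subset_span (by simp)))
      (pC_mem_spanJ p g _ u' h)
  · rw [SetLike.mem_coe, RingHom.mem_ker, RingHom.comp_apply]
    have heval : (Polynomial.eval₂RingHom
        (Polynomial.C : Polynomial (ZMod (p ^ 2)) →+*
          Polynomial (Polynomial (ZMod (p ^ 2))))
        (Polynomial.C t * Polynomial.X))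
        ((p : Polynomial (Polynomial (ZMod (p ^ 2)))) * Polynomial.X) =
        (p : Polynomial (Polynomial (ZMod (p ^ 2)))) * (Polynomial.C t * Polynomial.X) := by
      simp only [map_mul, map_natCast, coe_eval₂RingHom, eval₂_X]
    rw [heval]
    have key : (p : Polynomial (Polynomial (ZMod (p ^ 2)))) *
        (Polynomial.C t * Polynomial.X) =
        Polynomial.C t * ((p : Polynomial (Polynomial (ZMod (p ^ 2)))) * Polynomial.X) := by
      ring
    rw [Ideal.Quotient.eq_zero_iff_mem, key]
    exact Ideal.mul_mem_left _ _ (Ideal.subset_span (by simp))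

lemma not_mem_span_pg (p : ℕ) (hp : p.Prime) (g u : Polynomial (ZMod (p ^ 2)))
    (hg : g.Monic)
    (hu : u.map (ZMod.castHom (dvd_pow_self p (by norm_num : (2:ℕ) ≠ 0)) (ZMod p)) ≠ 0)
    (hudeg : u.degree < g.degree) :
    u ∉ Ideal.span ({(p : Polynomial (ZMod (p ^ 2))), g} : Set _) := by
  haveI : Fact p.Prime := ⟨hp⟩
  intro h
  obtain ⟨a, b, hab⟩ := Ideal.mem_span_pair.mp h
  set cst := ZMod.castHom (dvd_pow_self p (by norm_num : (2:ℕ) ≠ 0)) (ZMod p) with hcst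
  have hmap : u.map cst = (b.map cst) * (g.map cst) := by
    rw [← hab]
    have hp0 : ((p : ℕ) : Polynomial (ZMod (p ^ 2))).map cst = 0 := by
      rw [Polynomial.map_natCast, ← Polynomial.C_eq_natCast, ZMod.natCast_self, map_zero]
    rw [Polynomial.map_add, Polynomial.map_mul, Polynomial.map_mul, hp0, mul_zero, zero_add]
  have hdvd : (g.map cst) ∣ (u.map cst) := ⟨b.map cst, by rw [hmap]; ring⟩
  have h1 : (g.map cst).degree ≤ (u.map cst).degree := Polynomial.degree_le_of_dvd hdvd hu
  have h2 : (u.map cst).degree ≤ u.degree := Polynomial.degree_map_le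
  have h3 : (g.map cst).degree = g.degree := hg.degree_map cst
  rw [h3] at h1
  exact absurd (lt_of_le_of_lt (le_trans h1 h2) hudeg) (lt_irrefl _)
/-- Proposition 4.4 (2): with `g₁ = g₂ = g`, if there are `v₁(X), v₂(X) ∈ ℤ_{p²}[X]`
with `u₂ = v₂² · u₁` and `u₁ = v₁² · u₂` in `K = ℤ_{p²}[X]/(p, g)`, then
`R₁ = ℤ_{p²}[X,Y]/(g, Y² − p·u₁, pY)` and `R₂ = ℤ_{p²}[X,Y]/(g, Y² − p·u₂, pY)`
are isomorphic rings. -/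
theorem paperRingR_iso_of_square_relation
    (p : ℕ) (hp : p.Prime)
    (g u₁ u₂ : Polynomial (ZMod (p ^ 2)))
    (hgcoeff : ∀ k, (g.coeff k).val < p)
    (hu₁coeff : ∀ k, (u₁.coeff k).val < p) (hu₂coeff : ∀ k, (u₂.coeff k).val < p)
    (hg : g.Monic)
    (hgirr : Irreducible
      (g.map (ZMod.castHom (dvd_pow_self p (by norm_num : (2:ℕ) ≠ 0)) (ZMod p))))
    (hu₁ : u₁.map (ZMod.castHom (dvd_pow_self p (by norm_num : (2:ℕ) ≠ 0)) (ZMod p)) ≠ 0)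
    (hu₂ : u₂.map (ZMod.castHom (dvd_pow_self p (by norm_num : (2:ℕ) ≠ 0)) (ZMod p)) ≠ 0)
    (hu₁deg : u₁.degree < g.degree) (hu₂deg : u₂.degree < g.degree)
    (v₁ v₂ : Polynomial (ZMod (p ^ 2)))
    (hv₂ : Ideal.Quotient.mk
        (Ideal.span ({(p : Polynomial (ZMod (p ^ 2))), g} : Set (Polynomial (ZMod (p ^ 2)))))
        u₂ =
      (Ideal.Quotient.mk
        (Ideal.span ({(p : Polynomial (ZMod (p ^ 2))), g} : Set (Polynomial (ZMod (p ^ 2)))))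
        v₂) ^ 2 *
      Ideal.Quotient.mk
        (Ideal.span ({(p : Polynomial (ZMod (p ^ 2))), g} : Set (Polynomial (ZMod (p ^ 2)))))
        u₁)
    (hv₁ : Ideal.Quotient.mk
        (Ideal.span ({(p : Polynomial (ZMod (p ^ 2))), g} : Set (Polynomial (ZMod (p ^ 2)))))
        u₁ =
      (Ideal.Quotient.mk
        (Ideal.span ({(p : Polynomial (ZMod (p ^ 2))), g} : Set (Polynomial (ZMod (p ^ 2)))))
        v₁) ^ 2 *
      Ideal.Quotient.mk
        (Ideal.span ({(p : Polynomial (ZMod (p ^ 2))), g} : Set (Polynomial (ZMod (p ^ 2)))))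
        u₂) :
    Nonempty (paperRingR p g u₁ ≃+* paperRingR p g u₂) := by
  haveI : Fact p.Prime := ⟨hp⟩
  set I := Ideal.span
      ({(p : Polynomial (ZMod (p ^ 2))), g} : Set (Polynomial (ZMod (p ^ 2)))) with hI
  haveI hImax : I.IsMaximal := span_pg_isMaximal p hp g hgirr
  letI : Field (Polynomial (ZMod (p ^ 2)) ⧸ I) := Ideal.Quotient.field I
  have hu2ne : Ideal.Quotient.mk I u₂ ≠ 0 := by
    rw [Ne, Ideal.Quotient.eq_zero_iff_mem]
    exact not_mem_span_pg p hp g u₂ hg hu₂ hu₂deg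
  have hv2ne : Ideal.Quotient.mk I v₂ ≠ 0 := by
    intro h0
    apply hu2ne
    rw [hv₂, h0]
    ring
  obtain ⟨w, hw⟩ := Ideal.Quotient.mk_surjective ((Ideal.Quotient.mk I v₂)⁻¹)
  have hwv1 : Ideal.Quotient.mk I (w * v₂) = Ideal.Quotient.mk I 1 := by
    rw [map_mul, hw, inv_mul_cancel₀ hv2ne, map_one]
  have hwvI : w * v₂ - 1 ∈ I := Ideal.Quotient.eq.mp hwv1
  have h21 : v₂ ^ 2 * u₁ - u₂ ∈ I :=
    Ideal.Quotient.eq.mp (by rw [map_mul, map_pow]; exact hv₂.symm)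
  have h12 : w ^ 2 * u₂ - u₁ ∈ I := by
    refine Ideal.Quotient.eq.mp ?_
    rw [map_mul, map_pow, hv₂, hw, inv_pow, ← mul_assoc,
      inv_mul_cancel₀ (pow_ne_zero 2 hv2ne), one_mul]
  let f21 : paperRingR p g u₂ →+* paperRingR p g u₁ :=
    Ideal.Quotient.lift _
      ((Ideal.Quotient.mk _).comp
        (Polynomial.eval₂RingHom
          (Polynomial.C : Polynomial (ZMod (p ^ 2)) →+*
            Polynomial (Polynomial (ZMod (p ^ 2))))
          (Polynomial.C v₂ * Polynomial.X)))
      (fun a ha => RingHom.mem_ker.mp (subst_ker p g u₂ u₁ v₂ h21 ha))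
  let f12 : paperRingR p g u₁ →+* paperRingR p g u₂ :=
    Ideal.Quotient.lift _
      ((Ideal.Quotient.mk _).comp
        (Polynomial.eval₂RingHom
          (Polynomial.C : Polynomial (ZMod (p ^ 2)) →+*
            Polynomial (Polynomial (ZMod (p ^ 2))))
          (Polynomial.C w * Polynomial.X)))
      (fun a ha => RingHom.mem_ker.mp (subst_ker p g u₁ u₂ w h12 ha))
  have hcomp2 : f12.comp f21 = RingHom.id (paperRingR p g u₂) := by
    apply Ideal.Quotient.ringHom_ext
    apply Polynomial.ringHom_ext
    · intro a
      simp [f12, f21, Ideal.Quotient.lift_mk, coe_eval₂RingHom, eval₂_C]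
    · simp only [RingHom.comp_apply, f12, f21, Ideal.Quotient.lift_mk, coe_eval₂RingHom,
        eval₂_X, map_mul, eval₂_C, RingHom.id_apply]
      rw [← map_mul, ← map_mul, Ideal.Quotient.eq]
      have key : Polynomial.C v₂ * (Polynomial.C w * Polynomial.X) - Polynomial.X =
          Polynomial.C (w * v₂ - 1) * Polynomial.X := by
        simp only [map_sub, map_mul, map_one]
        ring
      rw [key]
      exact CzX_mem_spanJ p g _ u₂ hwvI
  have hcomp1 : f21.comp f12 = RingHom.id (paperRingR p g u₁) := by
    apply Ideal.Quotient.ringHom_ext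
    apply Polynomial.ringHom_ext
    · intro a
      simp [f12, f21, Ideal.Quotient.lift_mk, coe_eval₂RingHom, eval₂_C]
    · simp only [RingHom.comp_apply, f12, f21, Ideal.Quotient.lift_mk, coe_eval₂RingHom,
        eval₂_X, map_mul, eval₂_C, RingHom.id_apply]
      rw [← map_mul, ← map_mul, Ideal.Quotient.eq]
      have key : Polynomial.C w * (Polynomial.C v₂ * Polynomial.X) - Polynomial.X =
          Polynomial.C (w * v₂ - 1) * Polynomial.X := by
        simp only [map_sub, map_mul, map_one]
        ring
      rw [key]
      exact CzX_mem_spanJ p g _ u₁ hwvI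
  exact ⟨RingEquiv.ofRingHom f12 f21 hcomp2 hcomp1⟩
end
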